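/- arXiv:2506.13071 — 3 statements merged into one kernel-verified Lean document; each statement's English description precedes it below -/
import Mathlib

section
/- Let r, s > 0 and p ∈ (0,1) be constants and let f(x, y) = x^s/(x+y)^r. For every C' > 0 there exists a constant C > 0 such that for all sufficiently large natural numbers n, m and all real x, y with x = np + r_x, y = mp + r_y, |r_x| ≤ C'·√(n·log n) and |r_y| ≤ C'·√(m·log m), the spectral norm of the Hessian of f at (x, y) satisfies ‖∇²f(x, y)‖₂ ≤ C · n^{s−2} · max{s(n+m), r·n}² / (n+m)^{r+2}. -/
open Real Filter

/-- The ratio function `f(x, y) = x^s / (x+y)^r` (real powers). -/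
noncomputable def ratioFun (r s : ℝ) (x y : ℝ) : ℝ := x ^ s / (x + y) ^ r

/-- ∂f/∂x -/
noncomputable def D1 (r s x y : ℝ) : ℝ :=
  s * (x ^ (s-1) * (x+y) ^ (-r)) - r * (x ^ s * (x+y) ^ (-r-1))

/-- ∂f/∂y -/
noncomputable def D2 (r s x y : ℝ) : ℝ := -(r * (x ^ s * (x+y) ^ (-r-1)))

noncomputable def Hxx (r s x y : ℝ) : ℝ :=
  s*(s-1) * (x ^ (s-2) * (x+y) ^ (-r)) - 2*r*s * (x ^ (s-1) * (x+y) ^ (-r-1))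
    + r*(r+1) * (x ^ s * (x+y) ^ (-r-2))

noncomputable def Hxy (r s x y : ℝ) : ℝ :=
  -(r*s) * (x ^ (s-1) * (x+y) ^ (-r-1)) + r*(r+1) * (x ^ s * (x+y) ^ (-r-2))

noncomputable def Hyy (r s x y : ℝ) : ℝ := r*(r+1) * (x ^ s * (x+y) ^ (-r-2))

lemma evnt1 {x y : ℝ} (hx : 0 < x) (hxy : 0 < x + y) :
    ∀ᶠ a in nhds x, 0 < a ∧ 0 < a + y := by
  have h1 : ∀ᶠ a in nhds x, 0 < a := eventually_gt_nhds hx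
  have h3 : ∀ᶠ a in nhds x, 0 < a + y :=
    ((continuous_id.add continuous_const).continuousAt (x := x)).eventually
      (eventually_gt_nhds hxy)
  exact h1.and h3

lemma ratioFun_eq {r s x y : ℝ} (hxy : 0 < x + y) :
    ratioFun r s x y = x ^ s * (x + y) ^ (-r) := by
  rw [ratioFun, Real.rpow_neg hxy.le, div_eq_mul_inv]

lemma hD1 {r s x y : ℝ} (hx : 0 < x) (hxy : 0 < x + y) :
    HasDerivAt (fun a => ratioFun r s a y) (D1 r s x y) x := by
  have h1 : HasDerivAt (fun a : ℝ => a ^ s) (s * x ^ (s-1)) x :=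
    Real.hasDerivAt_rpow_const (Or.inl hx.ne')
  have h2 : HasDerivAt (fun a : ℝ => (a + y) ^ (-r)) (1 * -r * (x+y) ^ (-r-1)) x := by
    simpa using ((hasDerivAt_id x).add_const y).rpow_const (p := -r) (Or.inl hxy.ne')
  have h := h1.mul h2
  have h' : HasDerivAt (fun a => ratioFun r s a y)
      (s * x ^ (s-1) * (x+y) ^ (-r) + x ^ s * (1 * -r * (x+y) ^ (-r-1))) x := by
    apply h.congr_of_eventuallyEq
    filter_upwards [evnt1 hx hxy] with a ha
    rw [ratioFun_eq ha.2]; rfl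
  convert h' using 1
  rw [D1]; ring

lemma hD2 {r s x y : ℝ} (hxy : 0 < x + y) :
    HasDerivAt (fun b => ratioFun r s x b) (D2 r s x y) y := by
  have h2 : HasDerivAt (fun b : ℝ => (x + b) ^ (-r)) (1 * -r * (x+y) ^ (-r-1)) y := by
    simpa using ((hasDerivAt_id y).const_add x).rpow_const (p := -r) (Or.inl hxy.ne')
  have h := h2.const_mul (x ^ s)
  have hev : ∀ᶠ b in nhds y, 0 < x + b := by
    exact ((continuous_const.add continuous_id).continuousAt (x := y)).eventually
      (eventually_gt_nhds hxy)
  have h' : HasDerivAt (fun b => ratioFun r s x b) (x ^ s * (1 * -r * (x+y) ^ (-r-1))) y := by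
    apply h.congr_of_eventuallyEq
    filter_upwards [hev] with b hb
    rw [ratioFun_eq hb]
  convert h' using 1
  rw [D2]; ring

lemma mono_all {r s a b : ℝ} (hr : 0 < r) (hs : 0 < s) (ha : 1 ≤ a) (hb : 1 ≤ b) :
    a^(s-2) * (a+b)^(-r)
        ≤ (1/s^2) * (a^(s-2) * (max (s*(a+b)) (r*a))^2 / (a+b)^(r+2)) ∧
    a^(s-1) * (a+b)^(-r-1)
        ≤ (1/(r*s)) * (a^(s-2) * (max (s*(a+b)) (r*a))^2 / (a+b)^(r+2)) ∧
    a^s * (a+b)^(-r-2)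
        ≤ (1/r^2) * (a^(s-2) * (max (s*(a+b)) (r*a))^2 / (a+b)^(r+2)) := by
  have ha0 : (0:ℝ) < a := lt_of_lt_of_le one_pos ha
  have hc0 : (0:ℝ) < a + b := by linarith
  set c := a + b with hc
  set M := max (s*c) (r*a) with hM
  have hM1 : s*c ≤ M := le_max_left _ _
  have hM2 : r*a ≤ M := le_max_right _ _
  have hM0 : 0 < M := lt_of_lt_of_le (by positivity) hM1
  have hA0 : (0:ℝ) < a^(s-2) := Real.rpow_pos_of_pos ha0 _
  have hB0 : (0:ℝ) < (c^(r+2))⁻¹ := by positivity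
  -- exponent identities
  have e1 : a^(s-1) = a^(s-2)*a := by
    rw [← Real.rpow_add_one ha0.ne']; congr 1; ring
  have e2 : a^s = a^(s-2)*a*a := by
    rw [← Real.rpow_add_one ha0.ne' (s-2), ← Real.rpow_add_one ha0.ne']; congr 1; ring
  have f0 : c^(-r) = (c^(r+2))⁻¹*c*c := by
    rw [← Real.rpow_neg hc0.le, ← Real.rpow_add_one hc0.ne' (-(r+2)),
      ← Real.rpow_add_one hc0.ne']; congr 1; ring
  have f1 : c^(-r-1) = (c^(r+2))⁻¹*c := by
    rw [← Real.rpow_neg hc0.le, ← Real.rpow_add_one hc0.ne' (-(r+2))]; congr 1; ring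
  have f2 : c^(-r-2) = (c^(r+2))⁻¹ := by
    rw [← Real.rpow_neg hc0.le]; congr 1; ring
  have key1 : s^2*(c*c) ≤ M^2 := by
    nlinarith [mul_le_mul hM1 hM1 (by positivity) hM0.le]
  have key2 : (r*s)*(a*c) ≤ M^2 := by
    nlinarith [mul_le_mul hM1 hM2 (by positivity) hM0.le]
  have key3 : r^2*(a*a) ≤ M^2 := by
    nlinarith [mul_le_mul hM2 hM2 (by positivity) hM0.le]
  refine ⟨?_, ?_, ?_⟩
  · rw [f0]
    calc a^(s-2) * ((c^(r+2))⁻¹*c*c) = (a^(s-2)*(c^(r+2))⁻¹/s^2) * (s^2*(c*c)) := by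
          field_simp
      _ ≤ (a^(s-2)*(c^(r+2))⁻¹/s^2) * M^2 := by gcongr
      _ = (1/s^2) * (a^(s-2) * M^2 / c^(r+2)) := by field_simp
  · rw [e1, f1]
    calc a^(s-2)*a * ((c^(r+2))⁻¹*c) = (a^(s-2)*(c^(r+2))⁻¹/(r*s)) * ((r*s)*(a*c)) := by
          field_simp
      _ ≤ (a^(s-2)*(c^(r+2))⁻¹/(r*s)) * M^2 := by gcongr
      _ = (1/(r*s)) * (a^(s-2) * M^2 / c^(r+2)) := by field_simp
  · rw [e2, f2]
    calc a^(s-2)*a*a * (c^(r+2))⁻¹ = (a^(s-2)*(c^(r+2))⁻¹/r^2) * (r^2*(a*a)) := by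
          field_simp
      _ ≤ (a^(s-2)*(c^(r+2))⁻¹/r^2) * M^2 := by gcongr
      _ = (1/r^2) * (a^(s-2) * M^2 / c^(r+2)) := by field_simp

lemma rpow_loc {p u v : ℝ} (hp : 0 < p) (hu : 0 < u) (h1 : p*u/2 ≤ v) (h2 : v ≤ 3*p*u/2)
    (t : ℝ) : v ^ t ≤ max ((p/2)^t) ((3*p/2)^t) * u^t := by
  have hv : 0 < v := lt_of_lt_of_le (by positivity) h1
  rcases le_or_gt 0 t with ht | ht
  · calc v^t ≤ (3*p/2*u)^t := Real.rpow_le_rpow hv.le (by linarith) ht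
      _ = (3*p/2)^t * u^t := Real.mul_rpow (by positivity) hu.le
      _ ≤ _ := by
          have : (0:ℝ) ≤ u^t := Real.rpow_nonneg hu.le t
          exact mul_le_mul_of_nonneg_right (le_max_right _ _) this
  · calc v^t ≤ (p/2*u)^t := Real.rpow_le_rpow_of_nonpos (by positivity) (by linarith) ht.le
      _ = (p/2)^t * u^t := Real.mul_rpow (by positivity) hu.le
      _ ≤ _ := by
          have : (0:ℝ) ≤ u^t := Real.rpow_nonneg hu.le t
          exact mul_le_mul_of_nonneg_right (le_max_left _ _) this
lemma hz1 (hxy : 0 < x + y) (t : ℝ) :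
    HasDerivAt (fun a : ℝ => (a + y) ^ t) (1 * t * (x+y) ^ (t-1)) x := by
  simpa using ((hasDerivAt_id x).add_const y).rpow_const (p := t) (Or.inl hxy.ne')

lemma hz2 (hxy : 0 < x + y) (t : ℝ) :
    HasDerivAt (fun b : ℝ => (x + b) ^ t) (1 * t * (x+y) ^ (t-1)) y := by
  simpa using ((hasDerivAt_id y).const_add x).rpow_const (p := t) (Or.inl hxy.ne')

lemma hD1x (hx : 0 < x) (hxy : 0 < x + y) :
    HasDerivAt (fun a => D1 r s a y) (Hxx r s x y) x := by
  have ha1 : HasDerivAt (fun a : ℝ => a ^ (s-1)) ((s-1) * x ^ (s-1-1)) x :=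
    Real.hasDerivAt_rpow_const (Or.inl hx.ne')
  have ha2 : HasDerivAt (fun a : ℝ => a ^ s) (s * x ^ (s-1)) x :=
    Real.hasDerivAt_rpow_const (Or.inl hx.ne')
  have h := ((ha1.mul (hz1 hxy (-r))).const_mul s).sub
    ((ha2.mul (hz1 hxy (-r-1))).const_mul r)
  refine h.congr_deriv ?_
  rw [Hxx, show s-1-1 = s-2 from by ring, show -r-1-1 = -r-2 from by ring]
  ring

lemma hD1y (hxy : 0 < x + y) :
    HasDerivAt (fun b => D1 r s x b) (Hxy r s x y) y := by
  have h := (((hz2 hxy (-r)).const_mul (x ^ (s-1))).const_mul s).sub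
    (((hz2 hxy (-r-1)).const_mul (x ^ s)).const_mul r)
  refine h.congr_deriv ?_
  rw [Hxy, show -r-1-1 = -r-2 from by ring]
  ring

lemma hD2x (hx : 0 < x) (hxy : 0 < x + y) :
    HasDerivAt (fun a => D2 r s a y) (Hxy r s x y) x := by
  have ha2 : HasDerivAt (fun a : ℝ => a ^ s) (s * x ^ (s-1)) x :=
    Real.hasDerivAt_rpow_const (Or.inl hx.ne')
  have h := ((ha2.mul (hz1 hxy (-r-1))).const_mul r).neg
  refine h.congr_deriv ?_
  rw [Hxy, show -r-1-1 = -r-2 from by ring]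
  ring

lemma hD2y (hxy : 0 < x + y) :
    HasDerivAt (fun b => D2 r s x b) (Hyy r s x y) y := by
  have h := (((hz2 hxy (-r-1)).const_mul (x ^ s)).const_mul r).neg
  refine h.congr_deriv ?_
  rw [Hyy, show -r-1-1 = -r-2 from by ring]
  ring

/-- The Hessian matrix of second partial derivatives of `ratioFun r s` at `(x, y)`. -/
noncomputable def ratioHessian (r s : ℝ) (x y : ℝ) : Matrix (Fin 2) (Fin 2) ℝ :=
  !![deriv (fun a => deriv (fun a' => ratioFun r s a' y) a) x,
     deriv (fun b => deriv (fun a => ratioFun r s a b) x) y;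
     deriv (fun a => deriv (fun b => ratioFun r s a b) y) x,
     deriv (fun b => deriv (fun b' => ratioFun r s x b') b) y]


lemma opnorm_le_sum_abs (A : Matrix (Fin 2) (Fin 2) ℝ) :
    ‖Matrix.toEuclideanCLM (𝕜 := ℝ) A‖ ≤ |A 0 0| + |A 0 1| + |A 1 0| + |A 1 1| := by
  apply ContinuousLinearMap.opNorm_le_bound _ (by positivity)
  intro x
  have hx : ∀ i, |x i| ≤ ‖x‖ := by
    intro i
    rw [EuclideanSpace.norm_eq]
    rw [show |x i| = √(|x i|^2) by rw [Real.sqrt_sq_eq_abs, abs_abs]]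
    apply Real.sqrt_le_sqrt
    rw [← Real.norm_eq_abs]
    exact Finset.single_le_sum (f := fun j => ‖x j‖^2) (fun j _ => by positivity)
      (Finset.mem_univ i)
  have happ : ∀ i, (Matrix.toEuclideanCLM (𝕜 := ℝ) A x) i = A i 0 * x 0 + A i 1 * x 1 := by
    intro i
    show A.mulVec (fun j => x j) i = _
    simp [Matrix.mulVec, dotProduct, Fin.sum_univ_two]
  have hrow : ∀ i, |(Matrix.toEuclideanCLM (𝕜 := ℝ) A x) i| ≤ (|A i 0| + |A i 1|) * ‖x‖ := by
    intro i
    rw [happ i]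
    calc |A i 0 * x 0 + A i 1 * x 1| ≤ |A i 0 * x 0| + |A i 1 * x 1| := abs_add_le _ _
      _ = |A i 0| * |x 0| + |A i 1| * |x 1| := by rw [abs_mul, abs_mul]
      _ ≤ |A i 0| * ‖x‖ + |A i 1| * ‖x‖ := by
          gcongr <;> [exact hx 0; exact hx 1]
      _ = (|A i 0| + |A i 1|) * ‖x‖ := by ring
  rw [EuclideanSpace.norm_eq]
  have hnn : (0:ℝ) ≤ (|A 0 0| + |A 0 1| + |A 1 0| + |A 1 1|) * ‖x‖ := by positivity
  rw [show (|A 0 0| + |A 0 1| + |A 1 0| + |A 1 1|) * ‖x‖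
      = √(((|A 0 0| + |A 0 1| + |A 1 0| + |A 1 1|) * ‖x‖)^2) by rw [Real.sqrt_sq hnn]]
  apply Real.sqrt_le_sqrt
  rw [Fin.sum_univ_two]
  have h0 := hrow 0
  have h1 := hrow 1
  have e0 : ‖(Matrix.toEuclideanCLM (𝕜 := ℝ) A x) 0‖^2 ≤ ((|A 0 0| + |A 0 1|) * ‖x‖)^2 := by
    rw [Real.norm_eq_abs]; exact pow_le_pow_left₀ (abs_nonneg _) h0 2
  have e1 : ‖(Matrix.toEuclideanCLM (𝕜 := ℝ) A x) 1‖^2 ≤ ((|A 1 0| + |A 1 1|) * ‖x‖)^2 := by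
    rw [Real.norm_eq_abs]; exact pow_le_pow_left₀ (abs_nonneg _) h1 2
  refine (add_le_add e0 e1).trans ?_
  have : ((|A 0 0| + |A 0 1|) * ‖x‖)^2 + ((|A 1 0| + |A 1 1|) * ‖x‖)^2
      ≤ ((|A 0 0| + |A 0 1| + |A 1 0| + |A 1 1|) * ‖x‖)^2 := by
    have h2 : (0:ℝ) ≤ (|A 0 0| + |A 0 1|) * (|A 1 0| + |A 1 1|) := by positivity
    nlinarith [norm_nonneg x, sq_nonneg ‖x‖]
  exact this

section entries
variable {r s x y : ℝ}

lemma evnt2 (hxy : 0 < x + y) : ∀ᶠ b in nhds y, 0 < x + b :=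
  ((continuous_const.add continuous_id).continuousAt (x := y)).eventually
    (eventually_gt_nhds hxy)

lemma entry00 (hx : 0 < x) (hxy : 0 < x + y) :
    deriv (fun a => deriv (fun a' => ratioFun r s a' y) a) x = Hxx r s x y := by
  have hev : (fun a => deriv (fun a' => ratioFun r s a' y) a) =ᶠ[nhds x]
      (fun a => D1 r s a y) := by
    filter_upwards [evnt1 hx hxy] with a ha
    exact (hD1 ha.1 ha.2).deriv
  rw [hev.deriv_eq]
  exact (hD1x hx hxy).deriv

lemma entry01 (hx : 0 < x) (hxy : 0 < x + y) :
    deriv (fun b => deriv (fun a => ratioFun r s a b) x) y = Hxy r s x y := by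
  have hev : (fun b => deriv (fun a => ratioFun r s a b) x) =ᶠ[nhds y]
      (fun b => D1 r s x b) := by
    filter_upwards [evnt2 hxy] with b hb
    exact (hD1 hx hb).deriv
  rw [hev.deriv_eq]
  exact (hD1y hxy).deriv

lemma entry10 (hx : 0 < x) (hxy : 0 < x + y) :
    deriv (fun a => deriv (fun b => ratioFun r s a b) y) x = Hxy r s x y := by
  have hev : (fun a => deriv (fun b => ratioFun r s a b) y) =ᶠ[nhds x]
      (fun a => D2 r s a y) := by
    filter_upwards [evnt1 hx hxy] with a ha
    exact (hD2 ha.2).deriv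
  rw [hev.deriv_eq]
  exact (hD2x hx hxy).deriv

lemma entry11 (hxy : 0 < x + y) :
    deriv (fun b => deriv (fun b' => ratioFun r s x b') b) y = Hyy r s x y := by
  have hev : (fun b => deriv (fun b' => ratioFun r s x b') b) =ᶠ[nhds y]
      (fun b => D2 r s x b) := by
    filter_upwards [evnt2 hxy] with b hb
    exact (hD2 hb).deriv
  rw [hev.deriv_eq]
  exact (hD2y hxy).deriv

lemma hess_norm_le (hx : 0 < x) (hxy : 0 < x + y) :
    ‖Matrix.toEuclideanCLM (𝕜 := ℝ) (ratioHessian r s x y)‖ ≤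
      |Hxx r s x y| + 2*|Hxy r s x y| + |Hyy r s x y| := by
  refine (opnorm_le_sum_abs _).trans (le_of_eq ?_)
  have e00 : ratioHessian r s x y 0 0 = Hxx r s x y := by
    rw [ratioHessian, Matrix.of_apply]; simp
    exact entry00 hx hxy
  have e01 : ratioHessian r s x y 0 1 = Hxy r s x y := by
    rw [ratioHessian, Matrix.of_apply]; simp
    exact entry01 hx hxy
  have e10 : ratioHessian r s x y 1 0 = Hxy r s x y := by
    rw [ratioHessian, Matrix.of_apply]; simp
    exact entry10 hx hxy
  have e11 : ratioHessian r s x y 1 1 = Hyy r s x y := by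
    rw [ratioHessian, Matrix.of_apply]; simp
    exact entry11 hxy
  rw [e00, e01, e10, e11]; ring

end entries

lemma tri_abs (u v w : ℝ) : |u - v + w| ≤ |u| + |v| + |w| := by
  calc |u - v + w| ≤ |u - v| + |w| := abs_add_le _ _
    _ ≤ |u| + |v| + |w| := by
      have h : |u - v| ≤ |u| + |v| := abs_sub u v
      linarith

lemma coeff_eq (r s K TT : ℝ) (hr : 0 < r) (hs : 0 < s) :
    |s*(s-1)| * (K*((1/s^2)*TT)) + 4*(r*s * (K*((1/(r*s))*TT)))
      + 4*(r*(r+1) * (K*((1/r^2)*TT)))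
    = (K * (|s*(s-1)|/s^2 + 4 + 4*(r+1)/r)) * TT := by
  field_simp

set_option maxHeartbeats 1000000 in
/-- For `r, s > 0`, `p ∈ (0,1)` and every `C' > 0`, there is a constant `C > 0` such that for
all sufficiently large `n, m` and all `x = np + r_x`, `y = mp + r_y` with
`|r_x| ≤ C'√(n log n)`, `|r_y| ≤ C'√(m log m)`, the spectral norm of the Hessian of
`f(x,y) = x^s/(x+y)^r` at `(x, y)` is at most `C · n^(s−2) · max{s(n+m), rn}² / (n+m)^(r+2)`. -/
theorem ratioHessian_norm_bound (r s p : ℝ) (hr : 0 < r) (hs : 0 < s)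
    (hp0 : 0 < p) (hp1 : p < 1) (C' : ℝ) (hC' : 0 < C') :
    ∃ C > 0, ∃ N : ℕ, ∀ n m : ℕ, N ≤ n → N ≤ m →
      ∀ rx ry : ℝ, |rx| ≤ C' * Real.sqrt (n * Real.log n) →
        |ry| ≤ C' * Real.sqrt (m * Real.log m) →
        ‖Matrix.toEuclideanCLM (𝕜 := ℝ) (ratioHessian r s (n * p + rx) (m * p + ry))‖ ≤
          C * (n : ℝ) ^ (s - 2) * (max (s * ((n : ℝ) + (m : ℝ))) (r * (n : ℝ))) ^ 2 /
            ((n : ℝ) + (m : ℝ)) ^ (r + 2) := by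
  have hmax_pos : ∀ t : ℝ, (0:ℝ) < max ((p/2)^t) ((3*p/2)^t) := fun t =>
    lt_of_lt_of_le (Real.rpow_pos_of_pos (by positivity) t) (le_max_left _ _)
  set K1 := max ((p/2)^(s-2)) ((3*p/2)^(s-2)) * max ((p/2)^(-r)) ((3*p/2)^(-r)) with hK1
  set K2 := max ((p/2)^(s-1)) ((3*p/2)^(s-1)) * max ((p/2)^(-r-1)) ((3*p/2)^(-r-1)) with hK2
  set K3 := max ((p/2)^s) ((3*p/2)^s) * max ((p/2)^(-r-2)) ((3*p/2)^(-r-2)) with hK3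
  set K := max K1 (max K2 K3) with hK
  have hK1p : 0 < K1 := mul_pos (hmax_pos _) (hmax_pos _)
  have hK2p : 0 < K2 := mul_pos (hmax_pos _) (hmax_pos _)
  have hK3p : 0 < K3 := mul_pos (hmax_pos _) (hmax_pos _)
  have hKp : 0 < K := lt_of_lt_of_le hK1p (le_max_left _ _)
  set C := K * (|s*(s-1)|/s^2 + 4 + 4*(r+1)/r) with hC
  have hCp : 0 < C := by
    apply mul_pos hKp
    have h1 : (0:ℝ) ≤ |s*(s-1)|/s^2 := by positivity
    have h2 : (0:ℝ) < 4*(r+1)/r := by positivity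
    linarith
  have hK1K : K1 ≤ K := le_max_left _ _
  have hK2K : K2 ≤ K := le_trans (le_max_left _ _) (le_max_right _ _)
  have hK3K : K3 ≤ K := le_trans (le_max_right _ _) (le_max_right _ _)
  refine ⟨C, hCp, ?_⟩
  clear_value K1 K2 K3 K C
  set ε := p/(2*C') with hε
  have hε0 : 0 < ε := by rw [hε]; positivity
  clear_value ε
  have hlog : ∀ᶠ k : ℕ in atTop, Real.log k ≤ ε^2 * k := by
    have h := Real.isLittleO_log_id_atTop.def (pow_pos hε0 2)
    filter_upwards [tendsto_natCast_atTop_atTop.eventually h] with k hk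
    simp only [Real.norm_eq_abs, id_eq] at hk
    calc Real.log k ≤ |Real.log k| := le_abs_self _
      _ ≤ ε^2 * |(k:ℝ)| := hk
      _ = ε^2 * k := by rw [abs_of_nonneg (Nat.cast_nonneg k)]
  obtain ⟨N, hN⟩ := eventually_atTop.mp ((eventually_ge_atTop 1).and hlog)
  refine ⟨N, ?_⟩
  intro n m hn hm rx ry hrx hry
  obtain ⟨hn1, hnlog⟩ := hN n hn
  obtain ⟨hm1, hmlog⟩ := hN m hm
  have hnn1 : (1:ℝ) ≤ (n:ℝ) := by exact_mod_cast hn1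
  have hmm1 : (1:ℝ) ≤ (m:ℝ) := by exact_mod_cast hm1
  have hnn0 : (0:ℝ) < (n:ℝ) := lt_of_lt_of_le one_pos hnn1
  have hmm0 : (0:ℝ) < (m:ℝ) := lt_of_lt_of_le one_pos hmm1
  have hc0 : (0:ℝ) < (n:ℝ) + (m:ℝ) := by linarith
  -- locate x and y
  have hsq : ∀ k : ℕ, Real.log k ≤ ε^2 * k → (1:ℝ) ≤ k →
      Real.sqrt (k * Real.log k) ≤ ε * k := by
    intro k h1 h2
    have h3 : (k:ℝ) * Real.log k ≤ (ε*k)^2 := by nlinarith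
    calc Real.sqrt (k * Real.log k) ≤ Real.sqrt ((ε*k)^2) := Real.sqrt_le_sqrt h3
      _ = ε*k := Real.sqrt_sq (by positivity)
  have hrxb : |rx| ≤ p*(n:ℝ)/2 := by
    calc |rx| ≤ C' * Real.sqrt (n * Real.log n) := hrx
      _ ≤ C' * (ε*n) := by gcongr; exact hsq n hnlog hnn1
      _ = p*(n:ℝ)/2 := by rw [hε]; field_simp
  have hryb : |ry| ≤ p*(m:ℝ)/2 := by
    calc |ry| ≤ C' * Real.sqrt (m * Real.log m) := hry
      _ ≤ C' * (ε*m) := by gcongr; exact hsq m hmlog hmm1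
      _ = p*(m:ℝ)/2 := by rw [hε]; field_simp
  set x := (n:ℝ) * p + rx with hxdef
  set y := (m:ℝ) * p + ry with hydef
  have hrx1 := (abs_le.mp hrxb).1
  have hrx2 := (abs_le.mp hrxb).2
  have hry1 := (abs_le.mp hryb).1
  have hry2 := (abs_le.mp hryb).2
  have hxl : p*(n:ℝ)/2 ≤ x := by rw [hxdef]; linarith
  have hxu : x ≤ 3*p*(n:ℝ)/2 := by rw [hxdef]; linarith
  have hyl : p*(m:ℝ)/2 ≤ y := by rw [hydef]; linarith
  have hyu : y ≤ 3*p*(m:ℝ)/2 := by rw [hydef]; linarith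
  have hzl : p*((n:ℝ)+(m:ℝ))/2 ≤ x + y := by linarith
  have hzu : x + y ≤ 3*p*((n:ℝ)+(m:ℝ))/2 := by linarith
  have hx0 : 0 < x := lt_of_lt_of_le (by positivity) hxl
  have hxy0 : 0 < x + y := lt_of_lt_of_le (by positivity) hzl
  clear_value x y
  -- the three positive monomials at (x, y)
  have hX1 : 0 < x^(s-2) * (x+y)^(-r) :=
    mul_pos (Real.rpow_pos_of_pos hx0 _) (Real.rpow_pos_of_pos hxy0 _)
  have hX2 : 0 < x^(s-1) * (x+y)^(-r-1) :=
    mul_pos (Real.rpow_pos_of_pos hx0 _) (Real.rpow_pos_of_pos hxy0 _)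
  have hX3 : 0 < x^s * (x+y)^(-r-2) :=
    mul_pos (Real.rpow_pos_of_pos hx0 _) (Real.rpow_pos_of_pos hxy0 _)
  obtain ⟨P1, P2, P3⟩ := mono_all (a := (n:ℝ)) (b := (m:ℝ)) hr hs hnn1 hmm1
  set TT := (n:ℝ)^(s-2) * (max (s*((n:ℝ)+(m:ℝ))) (r*(n:ℝ)))^2 / ((n:ℝ)+(m:ℝ))^(r+2) with hTT
  have hTTnn : 0 ≤ TT := by
    rw [hTT]
    have h1 : (0:ℝ) < (n:ℝ)^(s-2) := Real.rpow_pos_of_pos hnn0 _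
    have h2 : (0:ℝ) < ((n:ℝ)+(m:ℝ))^(r+2) := Real.rpow_pos_of_pos hc0 _
    positivity
  clear_value TT
  -- bounds on the monomials
  have t1 : x^(s-2) * (x+y)^(-r) ≤ K1 * ((n:ℝ)^(s-2) * ((n:ℝ)+(m:ℝ))^(-r)) := by
    have a1 := rpow_loc hp0 hnn0 hxl hxu (s-2)
    have b1 := rpow_loc hp0 hc0 hzl hzu (-r)
    calc x^(s-2) * (x+y)^(-r)
        ≤ (max ((p/2)^(s-2)) ((3*p/2)^(s-2)) * (n:ℝ)^(s-2)) *
          (max ((p/2)^(-r)) ((3*p/2)^(-r)) * ((n:ℝ)+(m:ℝ))^(-r)) :=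
          mul_le_mul a1 b1 (Real.rpow_nonneg hxy0.le _) (by positivity)
      _ = K1 * ((n:ℝ)^(s-2) * ((n:ℝ)+(m:ℝ))^(-r)) := by rw [hK1]; ring
  have t2 : x^(s-1) * (x+y)^(-r-1) ≤ K2 * ((n:ℝ)^(s-1) * ((n:ℝ)+(m:ℝ))^(-r-1)) := by
    have a1 := rpow_loc hp0 hnn0 hxl hxu (s-1)
    have b1 := rpow_loc hp0 hc0 hzl hzu (-r-1)
    calc x^(s-1) * (x+y)^(-r-1)
        ≤ (max ((p/2)^(s-1)) ((3*p/2)^(s-1)) * (n:ℝ)^(s-1)) *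
          (max ((p/2)^(-r-1)) ((3*p/2)^(-r-1)) * ((n:ℝ)+(m:ℝ))^(-r-1)) :=
          mul_le_mul a1 b1 (Real.rpow_nonneg hxy0.le _) (by positivity)
      _ = K2 * ((n:ℝ)^(s-1) * ((n:ℝ)+(m:ℝ))^(-r-1)) := by rw [hK2]; ring
  have t3 : x^s * (x+y)^(-r-2) ≤ K3 * ((n:ℝ)^s * ((n:ℝ)+(m:ℝ))^(-r-2)) := by
    have a1 := rpow_loc hp0 hnn0 hxl hxu s
    have b1 := rpow_loc hp0 hc0 hzl hzu (-r-2)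
    calc x^s * (x+y)^(-r-2)
        ≤ (max ((p/2)^s) ((3*p/2)^s) * (n:ℝ)^s) *
          (max ((p/2)^(-r-2)) ((3*p/2)^(-r-2)) * ((n:ℝ)+(m:ℝ))^(-r-2)) :=
          mul_le_mul a1 b1 (Real.rpow_nonneg hxy0.le _) (by positivity)
      _ = K3 * ((n:ℝ)^s * ((n:ℝ)+(m:ℝ))^(-r-2)) := by rw [hK3]; ring
  have u1 : x^(s-2) * (x+y)^(-r) ≤ K * ((1/s^2) * TT) := by
    refine t1.trans ?_
    refine mul_le_mul hK1K P1 (by positivity) hKp.le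
  have u2 : x^(s-1) * (x+y)^(-r-1) ≤ K * ((1/(r*s)) * TT) := by
    refine t2.trans ?_
    refine mul_le_mul hK2K P2 (by positivity) hKp.le
  have u3 : x^s * (x+y)^(-r-2) ≤ K * ((1/r^2) * TT) := by
    refine t3.trans ?_
    refine mul_le_mul hK3K P3 (by positivity) hKp.le
  -- entry absolute-value bounds
  have habs1 : |Hxx r s x y| ≤ |s*(s-1)| * (x^(s-2)*(x+y)^(-r))
      + 2*r*s * (x^(s-1)*(x+y)^(-r-1)) + r*(r+1) * (x^s*(x+y)^(-r-2)) := by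
    calc |Hxx r s x y| ≤ |s*(s-1) * (x^(s-2)*(x+y)^(-r))| + |2*r*s * (x^(s-1)*(x+y)^(-r-1))|
          + |r*(r+1) * (x^s*(x+y)^(-r-2))| := tri_abs _ _ _
      _ = _ := by
          have q1 : |s*(s-1) * (x^(s-2)*(x+y)^(-r))| = |s*(s-1)| * (x^(s-2)*(x+y)^(-r)) := by
            rw [abs_mul, abs_of_pos hX1]
          have q2 : |2*r*s * (x^(s-1)*(x+y)^(-r-1))| = 2*r*s * (x^(s-1)*(x+y)^(-r-1)) := by
            rw [abs_mul, abs_of_pos hX2, abs_of_pos (show (0:ℝ) < 2*r*s by positivity)]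
          have q3 : |r*(r+1) * (x^s*(x+y)^(-r-2))| = r*(r+1) * (x^s*(x+y)^(-r-2)) := by
            rw [abs_mul, abs_of_pos hX3, abs_of_pos (show (0:ℝ) < r*(r+1) by positivity)]
          rw [q1, q2, q3]
  have habs2 : |Hxy r s x y| ≤ r*s * (x^(s-1)*(x+y)^(-r-1)) + r*(r+1) * (x^s*(x+y)^(-r-2)) := by
    calc |Hxy r s x y| ≤ |(-(r*s)) * (x^(s-1)*(x+y)^(-r-1))| + |r*(r+1) * (x^s*(x+y)^(-r-2))| :=
          abs_add_le _ _
      _ = _ := by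
          have q2 : |(-(r*s)) * (x^(s-1)*(x+y)^(-r-1))| = r*s * (x^(s-1)*(x+y)^(-r-1)) := by
            rw [abs_mul, abs_of_pos hX2, abs_neg,
              abs_of_pos (show (0:ℝ) < r*s by positivity)]
          have q3 : |r*(r+1) * (x^s*(x+y)^(-r-2))| = r*(r+1) * (x^s*(x+y)^(-r-2)) := by
            rw [abs_mul, abs_of_pos hX3, abs_of_pos (show (0:ℝ) < r*(r+1) by positivity)]
          rw [q2, q3]
  have habs3 : |Hyy r s x y| ≤ r*(r+1) * (x^s*(x+y)^(-r-2)) := by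
    rw [Hyy, abs_mul, abs_of_pos hX3, abs_of_pos (show (0:ℝ) < r*(r+1) by positivity)]
  -- combine
  refine (hess_norm_le hx0 hxy0).trans ?_
  have w1 := mul_le_mul_of_nonneg_left u1 (abs_nonneg (s*(s-1)))
  have w2 := mul_le_mul_of_nonneg_left u2 (show (0:ℝ) ≤ r*s by positivity)
  have w3 := mul_le_mul_of_nonneg_left u3 (show (0:ℝ) ≤ r*(r+1) by positivity)
  have hCeq : |s*(s-1)| * (K*((1/s^2)*TT)) + 4*(r*s * (K*((1/(r*s))*TT)))
      + 4*(r*(r+1) * (K*((1/r^2)*TT))) = C * TT := by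
    rw [hC]; exact coeff_eq r s K TT hr hs
  have hfinal : |Hxx r s x y| + 2*|Hxy r s x y| + |Hyy r s x y| ≤ C * TT := by
    linarith only [habs1, habs2, habs3, w1, w2, w3, hCeq]
  refine hfinal.trans (le_of_eq ?_)
  rw [hTT]; ring
end

section
/- Let r, s > 0 and p ∈ (0,1) be constants and let f(x, y) = x^s/(x+y)^r. Define the Taylor remainder Q(x, y) = f(x, y) − f(np, mp) − ∇f(np, mp)·(x − np, y − mp). For every C' > 0 there exists a constant C > 0 such that for all sufficiently large n, m and all real x, y with |x − np| ≤ C'·√(n·log n) and |y − mp| ≤ C'·√(m·log m), one has |Q(x, y)| ≤ C · n^{s−2} · log(n+m) / (n+m)^{r−1}. -/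
open Real Filter

/-- The ratio function `f(x, y) = x^s / (x+y)^r` as a function on `ℝ × ℝ` (real powers). -/
noncomputable def ratioFunP (r s : ℝ) (q : ℝ × ℝ) : ℝ := q.1 ^ s / (q.1 + q.2) ^ r

/-- The first-order Taylor remainder of `f(x,y) = x^s/(x+y)^r` about `(np, mp)`:
`Q(x, y) = f(x, y) − f(np, mp) − ∇f(np, mp)·(x − np, y − mp)`. -/
noncomputable def taylorRem (r s : ℝ) (np mp x y : ℝ) : ℝ :=
  ratioFunP r s (x, y) - ratioFunP r s (np, mp) -
    fderiv ℝ (ratioFunP r s) (np, mp) (x - np, y - mp)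

open Set

private lemma affine_hasDerivAt (α β t : ℝ) : HasDerivAt (fun t : ℝ => α + t * β) β t := by
  simpa using ((hasDerivAt_id t).mul_const β).const_add α

private lemma affine_rpow_hasDerivAt (α β e t : ℝ) (h : α + t * β ≠ 0) :
    HasDerivAt (fun t : ℝ => (α + t * β) ^ e) (β * e * (α + t * β) ^ (e - 1)) t :=
  (affine_hasDerivAt α β t).rpow_const (Or.inl h)

private lemma rpow_sandwich {A c : ℝ} (e : ℝ) (hA : 0 < A) (h1 : A / 2 ≤ c) (h2 : c ≤ 2 * A) :
    c ^ e ≤ 2 ^ |e| * A ^ e := by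
  rcases le_or_gt 0 e with he | he
  · rw [abs_of_nonneg he]
    calc c ^ e ≤ (2 * A) ^ e := Real.rpow_le_rpow (by linarith) h2 he
    _ = 2 ^ e * A ^ e := Real.mul_rpow (by norm_num) hA.le
  · rw [abs_of_neg he]
    calc c ^ e ≤ (A / 2) ^ e := Real.rpow_le_rpow_of_nonpos (by linarith) h1 he.le
    _ = 2 ^ (-e) * A ^ e := by
        rw [Real.div_rpow hA.le (by norm_num : (0:ℝ) ≤ 2), Real.rpow_neg (by norm_num : (0:ℝ) ≤ 2)]
        ring

private lemma hasDerivAt_g_aux (s r a d1 B b t : ℝ) (hU : a + t * d1 ≠ 0) (hW : B + t * b ≠ 0) :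
    HasDerivAt (fun τ : ℝ => (a + τ * d1) ^ s * (B + τ * b) ^ (-r))
      (d1 * s * (a + t * d1) ^ (s - 1) * (B + t * b) ^ (-r) +
        (a + t * d1) ^ s * (b * (-r) * (B + t * b) ^ (-r - 1))) t := by
  exact (affine_rpow_hasDerivAt a d1 s t hU).mul (affine_rpow_hasDerivAt B b (-r) t hW)

private lemma hasDerivAt_G_aux (s r a d1 B b t : ℝ) (hU : a + t * d1 ≠ 0) (hW : B + t * b ≠ 0) :
    HasDerivAt (fun τ : ℝ => d1 * s * (a + τ * d1) ^ (s - 1) * (B + τ * b) ^ (-r) +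
        (a + τ * d1) ^ s * (b * (-r) * (B + τ * b) ^ (-r - 1)))
      (s * (s - 1) * (d1 ^ 2 * ((a + t * d1) ^ (s - 2) * (B + t * b) ^ (-r))) -
        2 * (s * r) * (d1 * b * ((a + t * d1) ^ (s - 1) * (B + t * b) ^ (-r - 1))) +
        r * (r + 1) * (b ^ 2 * ((a + t * d1) ^ s * (B + t * b) ^ (-r - 2)))) t := by
  have h1 := ((affine_rpow_hasDerivAt a d1 (s - 1) t hU).const_mul (d1 * s)).mul
    (affine_rpow_hasDerivAt B b (-r) t hW)
  have h2 := (affine_rpow_hasDerivAt a d1 s t hU).mul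
    ((affine_rpow_hasDerivAt B b (-r - 1) t hW).const_mul (b * (-r)))
  have h := h1.add h2
  refine h.congr_deriv ?_
  rw [show s - 1 - 1 = s - 2 by ring, show -r - 1 - 1 = -r - 2 by ring]
  ring

set_option maxHeartbeats 1600000 in
private lemma core_bound (r s : ℝ) (hr : 0 < r) (hs : 0 < s)
    {a c D x y : ℝ} (ha : 0 < a) (hc : 0 < c)
    (hxD : |x - a| ≤ D) (hyD : |y - c| ≤ D)
    (hxa : |x - a| ≤ a / 2) (hyc : |y - c| ≤ c / 2) :
    |taylorRem r s a c x y| ≤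
      (s * |s - 1| * 2 ^ |s - 2| * 2 ^ r + 4 * (s * r) * (2 ^ |s - 1| * 2 ^ (r + 1)) +
          4 * (r * (r + 1)) * (2 ^ s * 2 ^ (r + 2))) *
        (D ^ 2 * (a ^ (s - 2) * (a + c) ^ (-r))) := by
  have hD0 : 0 ≤ D := (abs_nonneg _).trans hxD
  set d1 := x - a with hd1
  set d2 := y - c with hd2
  set b := d1 + d2 with hb
  set B := a + c with hBdef
  clear_value d1 d2 b B
  have hB : 0 < B := by rw [hBdef]; linarith
  have hbB : |b| ≤ B / 2 := by
    calc |b| = |d1 + d2| := by rw [hb]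
    _ ≤ |d1| + |d2| := abs_add_le _ _
    _ ≤ a / 2 + c / 2 := add_le_add hxa hyc
    _ = B / 2 := by rw [hBdef]; ring
  have hbD : |b| ≤ 2 * D := by
    calc |b| = |d1 + d2| := by rw [hb]
    _ ≤ |d1| + |d2| := abs_add_le _ _
    _ ≤ D + D := add_le_add hxD hyD
    _ = 2 * D := by ring
  have hu : ∀ t ∈ Icc (0:ℝ) 1, a / 2 ≤ a + t * d1 ∧ a + t * d1 ≤ 2 * a := by
    intro t ht
    have h1 : |t * d1| ≤ a / 2 := by
      rw [abs_mul, abs_of_nonneg ht.1]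
      calc t * |d1| ≤ 1 * (a / 2) := mul_le_mul ht.2 hxa (abs_nonneg _) zero_le_one
      _ = a / 2 := one_mul _
    have h2 := abs_le.mp h1
    constructor <;> nlinarith [h2.1, h2.2]
  have hw : ∀ t ∈ Icc (0:ℝ) 1, B / 2 ≤ B + t * b ∧ B + t * b ≤ 2 * B := by
    intro t ht
    have h1 : |t * b| ≤ B / 2 := by
      rw [abs_mul, abs_of_nonneg ht.1]
      calc t * |b| ≤ 1 * (B / 2) := mul_le_mul ht.2 hbB (abs_nonneg _) zero_le_one
      _ = B / 2 := one_mul _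
    have h2 := abs_le.mp h1
    constructor <;> nlinarith [h2.1, h2.2]
  have hUne : ∀ t ∈ Icc (0:ℝ) 1, a + t * d1 ≠ 0 := fun t ht =>
    ne_of_gt (lt_of_lt_of_le (by linarith : (0:ℝ) < a / 2) (hu t ht).1)
  have hWne : ∀ t ∈ Icc (0:ℝ) 1, B + t * b ≠ 0 := fun t ht =>
    ne_of_gt (lt_of_lt_of_le (by linarith : (0:ℝ) < B / 2) (hw t ht).1)
  set g : ℝ → ℝ := fun τ => (a + τ * d1) ^ s * (B + τ * b) ^ (-r) with hgdef
  set G : ℝ → ℝ := fun τ => d1 * s * (a + τ * d1) ^ (s - 1) * (B + τ * b) ^ (-r) +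
      (a + τ * d1) ^ s * (b * (-r) * (B + τ * b) ^ (-r - 1)) with hGdef
  set G2 : ℝ → ℝ := fun τ =>
      s * (s - 1) * (d1 ^ 2 * ((a + τ * d1) ^ (s - 2) * (B + τ * b) ^ (-r))) -
        2 * (s * r) * (d1 * b * ((a + τ * d1) ^ (s - 1) * (B + τ * b) ^ (-r - 1))) +
        r * (r + 1) * (b ^ 2 * ((a + τ * d1) ^ s * (B + τ * b) ^ (-r - 2))) with hG2def
  clear_value g G G2
  have hgG : ∀ t ∈ Icc (0:ℝ) 1, HasDerivAt g (G t) t := by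
    intro t ht
    rw [hgdef, hGdef]
    exact hasDerivAt_g_aux s r a d1 B b t (hUne t ht) (hWne t ht)
  have hGG2 : ∀ t ∈ Icc (0:ℝ) 1, HasDerivAt G (G2 t) t := by
    intro t ht
    rw [hGdef, hG2def]
    exact hasDerivAt_G_aux s r a d1 B b t (hUne t ht) (hWne t ht)
  set K := s * |s - 1| * 2 ^ |s - 2| * 2 ^ r + 4 * (s * r) * (2 ^ |s - 1| * 2 ^ (r + 1)) +
      4 * (r * (r + 1)) * (2 ^ s * 2 ^ (r + 2)) with hK
  set M := K * (D ^ 2 * (a ^ (s - 2) * B ^ (-r))) with hM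
  clear_value K M
  have h2e : ∀ e : ℝ, (0:ℝ) ≤ 2 ^ e := fun e => (Real.rpow_pos_of_pos two_pos e).le
  have hK0 : 0 ≤ K := by
    rw [hK]
    have h1 : (0:ℝ) ≤ s * |s - 1| * 2 ^ |s - 2| * 2 ^ r :=
      mul_nonneg (mul_nonneg (mul_nonneg hs.le (abs_nonneg _)) (h2e _)) (h2e _)
    have h2 : (0:ℝ) ≤ 4 * (s * r) * (2 ^ |s - 1| * 2 ^ (r + 1)) :=
      mul_nonneg (mul_nonneg (by norm_num) (mul_nonneg hs.le hr.le))
        (mul_nonneg (h2e _) (h2e _))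
    have h3 : (0:ℝ) ≤ 4 * (r * (r + 1)) * (2 ^ s * 2 ^ (r + 2)) :=
      mul_nonneg (mul_nonneg (by norm_num) (mul_nonneg hr.le (by linarith)))
        (mul_nonneg (h2e _) (h2e _))
    linarith
  have haX : 0 ≤ a ^ (s - 2) * B ^ (-r) :=
    mul_nonneg (Real.rpow_nonneg ha.le _) (Real.rpow_nonneg hB.le _)
  have hM0 : 0 ≤ M := by
    rw [hM]
    exact mul_nonneg hK0 (mul_nonneg (sq_nonneg _) haX)
  -- reductions
  have habB : a / B ≤ 1 := (div_le_one hB).mpr (by rw [hBdef]; linarith)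
  have hred1 : a ^ (s - 1) * B ^ (-r - 1) ≤ a ^ (s - 2) * B ^ (-r) := by
    have e1 : a ^ (s - 1) = a ^ (s - 2) * a := by
      rw [show s - 1 = s - 2 + 1 by ring, Real.rpow_add_one ha.ne']
    have e2 : B ^ (-r - 1) = B ^ (-r) * B⁻¹ := by
      rw [show -r - 1 = -r + -1 by ring, Real.rpow_add hB, Real.rpow_neg_one]
    rw [e1, e2]
    have h1 : a * B⁻¹ ≤ 1 := by rw [← div_eq_mul_inv]; exact habB
    have h0 : 0 ≤ a * B⁻¹ := mul_nonneg ha.le (inv_nonneg.mpr hB.le)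
    calc a ^ (s - 2) * a * (B ^ (-r) * B⁻¹) = a ^ (s - 2) * B ^ (-r) * (a * B⁻¹) := by ring
    _ ≤ a ^ (s - 2) * B ^ (-r) * 1 := mul_le_mul_of_nonneg_left h1 haX
    _ = a ^ (s - 2) * B ^ (-r) := mul_one _
  have hred2 : a ^ s * B ^ (-r - 2) ≤ a ^ (s - 2) * B ^ (-r) := by
    have e1 : a ^ s = a ^ (s - 2) * a * a := by
      rw [← Real.rpow_add_one ha.ne' (s - 2), ← Real.rpow_add_one ha.ne' (s - 2 + 1),
        show s - 2 + 1 + 1 = s by ring]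
    have e2 : B ^ (-r - 2) = B ^ (-r) * B⁻¹ * B⁻¹ := by
      rw [show -r - 2 = -r + -1 + -1 by ring, Real.rpow_add hB, Real.rpow_add hB,
        Real.rpow_neg_one]
    rw [e1, e2]
    have h1 : a * B⁻¹ ≤ 1 := by rw [← div_eq_mul_inv]; exact habB
    have h0 : 0 ≤ a * B⁻¹ := mul_nonneg ha.le (inv_nonneg.mpr hB.le)
    have h2 : a * B⁻¹ * (a * B⁻¹) ≤ 1 := by nlinarith
    calc a ^ (s - 2) * a * a * (B ^ (-r) * B⁻¹ * B⁻¹)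
        = a ^ (s - 2) * B ^ (-r) * (a * B⁻¹ * (a * B⁻¹)) := by ring
    _ ≤ a ^ (s - 2) * B ^ (-r) * 1 := mul_le_mul_of_nonneg_left h2 haX
    _ = a ^ (s - 2) * B ^ (-r) := mul_one _
  -- bound on the second derivative
  have hbound : ∀ t ∈ Icc (0:ℝ) 1, |G2 t| ≤ M := by
    intro t ht
    obtain ⟨hU1, hU2⟩ := hu t ht
    obtain ⟨hW1, hW2⟩ := hw t ht
    have hU0 : (0:ℝ) < a + t * d1 := lt_of_lt_of_le (by linarith) hU1
    have hW0 : (0:ℝ) < B + t * b := lt_of_lt_of_le (by linarith) hW1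
    have pU2 : (a + t * d1) ^ (s - 2) ≤ 2 ^ |s - 2| * a ^ (s - 2) := rpow_sandwich _ ha hU1 hU2
    have pU1 : (a + t * d1) ^ (s - 1) ≤ 2 ^ |s - 1| * a ^ (s - 1) := rpow_sandwich _ ha hU1 hU2
    have pU0 : (a + t * d1) ^ s ≤ 2 ^ s * a ^ s := by
      have := rpow_sandwich s ha hU1 hU2
      rwa [abs_of_pos hs] at this
    have pW0 : (B + t * b) ^ (-r) ≤ 2 ^ r * B ^ (-r) := by
      have := rpow_sandwich (-r) hB hW1 hW2
      rwa [abs_neg, abs_of_pos hr] at this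
    have pW1 : (B + t * b) ^ (-r - 1) ≤ 2 ^ (r + 1) * B ^ (-r - 1) := by
      have := rpow_sandwich (-r - 1) hB hW1 hW2
      have e : |(-r - 1 : ℝ)| = r + 1 := by
        rw [abs_of_nonpos (by linarith : (-r - 1 : ℝ) ≤ 0)]; ring
      rwa [e] at this
    have pW2 : (B + t * b) ^ (-r - 2) ≤ 2 ^ (r + 2) * B ^ (-r - 2) := by
      have := rpow_sandwich (-r - 2) hB hW1 hW2
      have e : |(-r - 2 : ℝ)| = r + 2 := by
        rw [abs_of_nonpos (by linarith : (-r - 2 : ℝ) ≤ 0)]; ring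
      rwa [e] at this
    have nU2 : 0 ≤ (a + t * d1) ^ (s - 2) := Real.rpow_nonneg hU0.le _
    have nU1 : 0 ≤ (a + t * d1) ^ (s - 1) := Real.rpow_nonneg hU0.le _
    have nU0 : 0 ≤ (a + t * d1) ^ s := Real.rpow_nonneg hU0.le _
    have nW0 : 0 ≤ (B + t * b) ^ (-r) := Real.rpow_nonneg hW0.le _
    have nW1 : 0 ≤ (B + t * b) ^ (-r - 1) := Real.rpow_nonneg hW0.le _
    have nW2 : 0 ≤ (B + t * b) ^ (-r - 2) := Real.rpow_nonneg hW0.le _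
    have hd1sq : d1 ^ 2 ≤ D ^ 2 := by
      have h := abs_le.mp hxD
      nlinarith [h.1, h.2]
    have hbsq : b ^ 2 ≤ 4 * D ^ 2 := by
      have h := abs_le.mp hbD
      nlinarith [h.1, h.2]
    have hd1b : |d1 * b| ≤ 2 * D ^ 2 := by
      rw [abs_mul]
      calc |d1| * |b| ≤ D * (2 * D) :=
        mul_le_mul hxD hbD (abs_nonneg _) hD0
      _ = 2 * D ^ 2 := by ring
    -- three terms
    have hT1 : |s * (s - 1) * (d1 ^ 2 * ((a + t * d1) ^ (s - 2) * (B + t * b) ^ (-r)))| ≤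
        s * |s - 1| * 2 ^ |s - 2| * 2 ^ r * (D ^ 2 * (a ^ (s - 2) * B ^ (-r))) := by
      rw [abs_mul, abs_mul, abs_of_pos hs,
        abs_of_nonneg (mul_nonneg (sq_nonneg _) (mul_nonneg nU2 nW0))]
      calc s * |s - 1| * (d1 ^ 2 * ((a + t * d1) ^ (s - 2) * (B + t * b) ^ (-r)))
          ≤ s * |s - 1| * (D ^ 2 * (2 ^ |s - 2| * a ^ (s - 2) * (2 ^ r * B ^ (-r)))) := by
            apply mul_le_mul_of_nonneg_left _ (mul_nonneg hs.le (abs_nonneg _))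
            exact mul_le_mul hd1sq
              (mul_le_mul pU2 pW0 nW0 (nU2.trans pU2)) (mul_nonneg nU2 nW0) (sq_nonneg _)
      _ = s * |s - 1| * 2 ^ |s - 2| * 2 ^ r * (D ^ 2 * (a ^ (s - 2) * B ^ (-r))) := by ring
    have hT2 : |2 * (s * r) * (d1 * b * ((a + t * d1) ^ (s - 1) * (B + t * b) ^ (-r - 1)))| ≤
        4 * (s * r) * (2 ^ |s - 1| * 2 ^ (r + 1)) * (D ^ 2 * (a ^ (s - 2) * B ^ (-r))) := by
      rw [abs_mul,
        abs_of_nonneg (mul_nonneg (by norm_num) (mul_nonneg hs.le hr.le) : (0:ℝ) ≤ 2 * (s * r)),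
        abs_mul, abs_of_nonneg (mul_nonneg nU1 nW1)]
      calc 2 * (s * r) * (|d1 * b| * ((a + t * d1) ^ (s - 1) * (B + t * b) ^ (-r - 1)))
          ≤ 2 * (s * r) * (2 * D ^ 2 * (2 ^ |s - 1| * a ^ (s - 1) * (2 ^ (r + 1) * B ^ (-r - 1)))) := by
            apply mul_le_mul_of_nonneg_left _
              (mul_nonneg (by norm_num) (mul_nonneg hs.le hr.le))
            exact mul_le_mul hd1b
              (mul_le_mul pU1 pW1 nW1 (nU1.trans pU1)) (mul_nonneg nU1 nW1) (by positivity)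
      _ = 4 * (s * r) * (2 ^ |s - 1| * 2 ^ (r + 1)) * (D ^ 2 * (a ^ (s - 1) * B ^ (-r - 1))) := by
            ring
      _ ≤ 4 * (s * r) * (2 ^ |s - 1| * 2 ^ (r + 1)) * (D ^ 2 * (a ^ (s - 2) * B ^ (-r))) := by
            apply mul_le_mul_of_nonneg_left _
              (mul_nonneg (mul_nonneg (by norm_num) (mul_nonneg hs.le hr.le))
                (mul_nonneg (h2e _) (h2e _)))
            exact mul_le_mul_of_nonneg_left hred1 (sq_nonneg _)
    have hT3 : |r * (r + 1) * (b ^ 2 * ((a + t * d1) ^ s * (B + t * b) ^ (-r - 2)))| ≤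
        4 * (r * (r + 1)) * (2 ^ s * 2 ^ (r + 2)) * (D ^ 2 * (a ^ (s - 2) * B ^ (-r))) := by
      rw [abs_mul, abs_of_nonneg (mul_nonneg hr.le (by linarith) : (0:ℝ) ≤ r * (r + 1)),
        abs_of_nonneg (mul_nonneg (sq_nonneg _) (mul_nonneg nU0 nW2))]
      calc r * (r + 1) * (b ^ 2 * ((a + t * d1) ^ s * (B + t * b) ^ (-r - 2)))
          ≤ r * (r + 1) * (4 * D ^ 2 * (2 ^ s * a ^ s * (2 ^ (r + 2) * B ^ (-r - 2)))) := by
            apply mul_le_mul_of_nonneg_left _ (mul_nonneg hr.le (by linarith))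
            exact mul_le_mul hbsq
              (mul_le_mul pU0 pW2 nW2 (nU0.trans pU0)) (mul_nonneg nU0 nW2) (by positivity)
      _ = 4 * (r * (r + 1)) * (2 ^ s * 2 ^ (r + 2)) * (D ^ 2 * (a ^ s * B ^ (-r - 2))) := by ring
      _ ≤ 4 * (r * (r + 1)) * (2 ^ s * 2 ^ (r + 2)) * (D ^ 2 * (a ^ (s - 2) * B ^ (-r))) := by
            apply mul_le_mul_of_nonneg_left _
              (mul_nonneg (mul_nonneg (by norm_num) (mul_nonneg hr.le (by linarith)))
                (mul_nonneg (h2e _) (h2e _)))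
            exact mul_le_mul_of_nonneg_left hred2 (sq_nonneg _)
    have tri : |G2 t| ≤
        |s * (s - 1) * (d1 ^ 2 * ((a + t * d1) ^ (s - 2) * (B + t * b) ^ (-r)))| +
        |2 * (s * r) * (d1 * b * ((a + t * d1) ^ (s - 1) * (B + t * b) ^ (-r - 1)))| +
        |r * (r + 1) * (b ^ 2 * ((a + t * d1) ^ s * (B + t * b) ^ (-r - 2)))| := by
      rw [hG2def]
      exact (abs_add_le _ _).trans (add_le_add (abs_sub _ _) le_rfl)
    have hMeq : M = s * |s - 1| * 2 ^ |s - 2| * 2 ^ r * (D ^ 2 * (a ^ (s - 2) * B ^ (-r))) +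
        4 * (s * r) * (2 ^ |s - 1| * 2 ^ (r + 1)) * (D ^ 2 * (a ^ (s - 2) * B ^ (-r))) +
        4 * (r * (r + 1)) * (2 ^ s * 2 ^ (r + 2)) * (D ^ 2 * (a ^ (s - 2) * B ^ (-r))) := by
      rw [hM, hK]; ring
    linarith
  -- identifying the fderiv term
  have hxy0 : (0:ℝ) < x + y := by
    have h1 := abs_le.mp hxa
    have h2 := abs_le.mp hyc
    have e1 : d1 = x - a := hd1
    have e2 : d2 = y - c := hd2
    nlinarith [h1.1, h2.1]
  have hfd : (fderiv ℝ (ratioFunP r s) (a, c)) (d1, d2) = G 0 := by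
    have hane : ((a, c) : ℝ × ℝ).1 ≠ 0 := ne_of_gt ha
    have hd₁ : DifferentiableAt ℝ (fun q : ℝ × ℝ => q.1 ^ s) (a, c) :=
      DifferentiableAt.rpow_const differentiableAt_fst (Or.inl hane)
    have hsum : DifferentiableAt ℝ (fun q : ℝ × ℝ => q.1 + q.2) (a, c) :=
      differentiableAt_fst.add differentiableAt_snd
    have hacne : ((a, c) : ℝ × ℝ).1 + ((a, c) : ℝ × ℝ).2 ≠ 0 :=
      ne_of_gt (by simp; linarith)
    have hd₂ : DifferentiableAt ℝ (fun q : ℝ × ℝ => (q.1 + q.2) ^ r) (a, c) :=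
      hsum.rpow_const (Or.inl hacne)
    have hdiff : DifferentiableAt ℝ (ratioFunP r s) (a, c) := by
      have hne : (fun q : ℝ × ℝ => (q.1 + q.2) ^ r) (a, c) ≠ 0 :=
        ne_of_gt (Real.rpow_pos_of_pos (show (0:ℝ) < a + c by linarith) r)
      unfold ratioFunP
      simp only [div_eq_mul_inv]
      exact hd₁.mul (hd₂.inv hne)
    have hγ : HasDerivAt (fun τ : ℝ => ((a + τ * d1, c + τ * d2) : ℝ × ℝ)) ((d1, d2) : ℝ × ℝ) 0 :=
      HasDerivAt.prodMk (affine_hasDerivAt a d1 0) (affine_hasDerivAt c d2 0)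
    have hpt : ((a + (0:ℝ) * d1, c + (0:ℝ) * d2) : ℝ × ℝ) = ((a, c) : ℝ × ℝ) := by norm_num
    have hF : HasFDerivAt (ratioFunP r s) (fderiv ℝ (ratioFunP r s) (a, c))
        ((fun τ : ℝ => ((a + τ * d1, c + τ * d2) : ℝ × ℝ)) 0) := by
      show HasFDerivAt (ratioFunP r s) (fderiv ℝ (ratioFunP r s) (a, c))
        ((a + (0:ℝ) * d1, c + (0:ℝ) * d2) : ℝ × ℝ)
      rw [hpt]
      exact hdiff.hasFDerivAt
    have hcomp : HasDerivAt (fun τ : ℝ => ratioFunP r s (a + τ * d1, c + τ * d2))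
        ((fderiv ℝ (ratioFunP r s) (a, c)) (d1, d2)) 0 := by
          have := HasFDerivAt.comp_hasDerivAt 0 hF hγ; exact this
    have heq : (fun τ : ℝ => ratioFunP r s (a + τ * d1, c + τ * d2)) =ᶠ[nhds (0:ℝ)] g := by
      filter_upwards [Ioo_mem_nhds (show (-1:ℝ) < 0 by norm_num) (show (0:ℝ) < 1 by norm_num)]
        with t ht
      have hWt : 0 < B + t * b := by
        have h1 : |t * b| ≤ B / 2 := by
          rw [abs_mul]
          calc |t| * |b| ≤ 1 * (B / 2) :=
            mul_le_mul (le_of_lt (abs_lt.mpr ⟨ht.1, ht.2⟩)) hbB (abs_nonneg _) zero_le_one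
          _ = B / 2 := one_mul _
        have h2 := abs_le.mp h1
        linarith [h2.1]
      show ratioFunP r s (a + t * d1, c + t * d2) = g t
      rw [hgdef]
      show ratioFunP r s (a + t * d1, c + t * d2) = (a + t * d1) ^ s * (B + t * b) ^ (-r)
      unfold ratioFunP
      have harg : a + t * d1 + (c + t * d2) = B + t * b := by rw [hBdef, hb]; ring
      show (a + t * d1) ^ s / (a + t * d1 + (c + t * d2)) ^ r = _
      rw [harg, Real.rpow_neg hWt.le, div_eq_mul_inv]
    have hg0' : HasDerivAt g (G 0) 0 := hgG 0 (left_mem_Icc.mpr zero_le_one)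
    exact (hcomp.congr_of_eventuallyEq heq.symm).unique hg0'
  -- endpoint values
  have hg1 : g 1 = ratioFunP r s (x, y) := by
    rw [hgdef]
    show (a + 1 * d1) ^ s * (B + 1 * b) ^ (-r) = _
    have e1 : a + 1 * d1 = x := by rw [hd1]; ring
    have e2 : B + 1 * b = x + y := by rw [hBdef, hb, hd1, hd2]; ring
    rw [e1, e2]
    unfold ratioFunP
    show x ^ s * (x + y) ^ (-r) = x ^ s / (x + y) ^ r
    rw [Real.rpow_neg hxy0.le, div_eq_mul_inv]
  have hg0 : g 0 = ratioFunP r s (a, c) := by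
    rw [hgdef]
    show (a + 0 * d1) ^ s * (B + 0 * b) ^ (-r) = _
    have e1 : a + 0 * d1 = a := by ring
    have e2 : B + 0 * b = a + c := by rw [hBdef]; ring
    rw [e1, e2]
    unfold ratioFunP
    show a ^ s * (a + c) ^ (-r) = a ^ s / (a + c) ^ r
    rw [Real.rpow_neg (by linarith : (0:ℝ) ≤ a + c), div_eq_mul_inv]
  -- mean value theorem, twice
  have step1 : ∀ t ∈ Icc (0:ℝ) 1, ‖G t - G 0‖ ≤ M * (t - 0) :=
    norm_image_sub_le_of_norm_deriv_le_segment' (C := M)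
      (fun t ht => (hGG2 t ht).hasDerivWithinAt)
      (fun t ht => by
        rw [Real.norm_eq_abs]; exact hbound t (Ico_subset_Icc_self ht))
  have step2 : ‖(g 1 - 1 * G 0) - (g 0 - 0 * G 0)‖ ≤ M :=
    norm_image_sub_le_of_norm_deriv_le_segment_01' (C := M)
      (fun t ht => by
        have hlin : HasDerivAt (fun τ : ℝ => τ * G 0) (G 0) t := by
          simpa using (hasDerivAt_id t).mul_const (G 0)
        exact ((hgG t ht).sub hlin).hasDerivWithinAt)
      (fun t ht => by
        rw [Real.norm_eq_abs]
        have h1 := step1 t (Ico_subset_Icc_self ht)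
        rw [Real.norm_eq_abs] at h1
        have : M * (t - 0) ≤ M := by nlinarith [ht.1, ht.2, hM0]
        linarith)
  have hrem : taylorRem r s a c x y = (g 1 - 1 * G 0) - (g 0 - 0 * G 0) := by
    unfold taylorRem
    rw [← hd1, ← hd2, hfd, ← hg1, ← hg0]
    ring
  rw [hrem]
  calc |(g 1 - 1 * G 0) - (g 0 - 0 * G 0)| = ‖(g 1 - 1 * G 0) - (g 0 - 0 * G 0)‖ :=
    (Real.norm_eq_abs _).symm
  _ ≤ M := step2

set_option maxHeartbeats 1000000 in
/-- For `r, s > 0`, `p ∈ (0,1)` and every `C' > 0`, there is a constant `C > 0` such that for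
all sufficiently large `n, m` and all `x, y` with `|x − np| ≤ C'√(n log n)` and
`|y − mp| ≤ C'√(m log m)`, the first-order Taylor remainder of `f(x,y) = x^s/(x+y)^r`
about `(np, mp)` satisfies `|Q(x, y)| ≤ C · n^(s−2) · log(n+m) / (n+m)^(r−1)`. -/
theorem taylorRem_bound (r s p : ℝ) (hr : 0 < r) (hs : 0 < s)
    (hp0 : 0 < p) (hp1 : p < 1) (C' : ℝ) (hC' : 0 < C') :
    ∃ C > 0, ∃ N : ℕ, ∀ n m : ℕ, N ≤ n → N ≤ m →
      ∀ x y : ℝ, |x - n * p| ≤ C' * Real.sqrt (n * Real.log n) →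
        |y - m * p| ≤ C' * Real.sqrt (m * Real.log m) →
        |taylorRem r s (n * p) (m * p) x y| ≤
          C * (n : ℝ) ^ (s - 2) * Real.log ((n : ℝ) + (m : ℝ)) /
            ((n : ℝ) + (m : ℝ)) ^ (r - 1) := by
  -- the constant
  set K := s * |s - 1| * 2 ^ |s - 2| * 2 ^ r + 4 * (s * r) * (2 ^ |s - 1| * 2 ^ (r + 1)) +
      4 * (r * (r + 1)) * (2 ^ s * 2 ^ (r + 2)) with hK
  clear_value K
  have h2e : ∀ e : ℝ, (0:ℝ) ≤ 2 ^ e := fun e => (Real.rpow_pos_of_pos two_pos e).le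
  have hK0 : 0 ≤ K := by
    rw [hK]
    have h1 : (0:ℝ) ≤ s * |s - 1| * 2 ^ |s - 2| * 2 ^ r :=
      mul_nonneg (mul_nonneg (mul_nonneg hs.le (abs_nonneg _)) (h2e _)) (h2e _)
    have h2 : (0:ℝ) ≤ 4 * (s * r) * (2 ^ |s - 1| * 2 ^ (r + 1)) :=
      mul_nonneg (mul_nonneg (by norm_num) (mul_nonneg hs.le hr.le))
        (mul_nonneg (h2e _) (h2e _))
    have h3 : (0:ℝ) ≤ 4 * (r * (r + 1)) * (2 ^ s * 2 ^ (r + 2)) :=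
      mul_nonneg (mul_nonneg (by norm_num) (mul_nonneg hr.le (by linarith)))
        (mul_nonneg (h2e _) (h2e _))
    linarith
  set C₀ := K * C' ^ 2 * (p ^ (s - 2) * p ^ (-r)) with hC₀
  have hC₀0 : 0 ≤ C₀ := by
    rw [hC₀]
    exact mul_nonneg (mul_nonneg hK0 (sq_nonneg _))
      (mul_nonneg (Real.rpow_nonneg hp0.le _) (Real.rpow_nonneg hp0.le _))
  -- choice of N
  have hlim : Tendsto (fun n : ℕ => Real.sqrt (Real.log n / n)) atTop (nhds 0) := by
    have h0 : Tendsto (fun x : ℝ => Real.log x / x) atTop (nhds 0) := by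
      have := Real.isLittleO_log_id_atTop.tendsto_div_nhds_zero
      simpa using this
    have h1 : Tendsto (fun n : ℕ => Real.log n / n) atTop (nhds 0) :=
      h0.comp tendsto_natCast_atTop_atTop
    have h2 := (Real.continuous_sqrt.tendsto 0).comp h1
    simpa only [Function.comp_def, Real.sqrt_zero] using h2
  have hev : ∀ᶠ n : ℕ in atTop, Real.sqrt (Real.log n / n) < p / (2 * C') :=
    hlim.eventually_lt_const (by positivity)
  obtain ⟨N₁, hN₁⟩ := eventually_atTop.mp hev
  refine ⟨C₀ + 1, by linarith, max N₁ 3, ?_⟩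
  intro n m hn hm x y hx hy
  have hn3 : 3 ≤ n := le_trans (le_max_right _ _) hn
  have hm3 : 3 ≤ m := le_trans (le_max_right _ _) hm
  have hnR : (3:ℝ) ≤ (n:ℝ) := by exact_mod_cast hn3
  have hmR : (3:ℝ) ≤ (m:ℝ) := by exact_mod_cast hm3
  have hn0 : (0:ℝ) < n := by linarith
  have hm0 : (0:ℝ) < m := by linarith
  have hlogn : 0 ≤ Real.log n := Real.log_nonneg (by linarith)
  have hlogm : 0 ≤ Real.log m := Real.log_nonneg (by linarith)
  have hnm0 : (0:ℝ) < (n:ℝ) + m := by linarith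
  have hlognm : 0 ≤ Real.log ((n:ℝ) + m) := Real.log_nonneg (by linarith)
  -- window fits inside half of the mean
  have key : ∀ k : ℕ, N₁ ≤ k → 3 ≤ k → C' * Real.sqrt (k * Real.log k) ≤ k * p / 2 := by
    intro k hk1 hk3
    have hkR : (3:ℝ) ≤ (k:ℝ) := by exact_mod_cast hk3
    have hk0 : (0:ℝ) < k := by linarith
    have hq := hN₁ k hk1
    have hsq : Real.sqrt ((k:ℝ) * Real.log k) = k * Real.sqrt (Real.log k / k) := by
      have e : (k:ℝ) * Real.log k = (k:ℝ) ^ 2 * (Real.log k / k) := by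
        field_simp
      rw [e, Real.sqrt_mul (sq_nonneg _), Real.sqrt_sq hk0.le]
    rw [hsq]
    calc C' * ((k:ℝ) * Real.sqrt (Real.log k / k)) ≤ C' * ((k:ℝ) * (p / (2 * C'))) := by
          apply mul_le_mul_of_nonneg_left _ hC'.le
          exact mul_le_mul_of_nonneg_left hq.le hk0.le
    _ = k * p / 2 := by field_simp
  have keyn := key n (le_trans (le_max_left _ _) hn) hn3
  have keym := key m (le_trans (le_max_left _ _) hm) hm3
  -- the common deviation bound
  set D := C' * Real.sqrt (((n:ℝ) + m) * Real.log ((n:ℝ) + m)) with hD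
  have hgrow : ∀ k : ℕ, (0:ℝ) < k → (k:ℝ) ≤ (n:ℝ) + m → 0 ≤ Real.log k →
      C' * Real.sqrt ((k:ℝ) * Real.log k) ≤ D := by
    intro k hk0 hkle hklog
    rw [hD]
    apply mul_le_mul_of_nonneg_left _ hC'.le
    apply Real.sqrt_le_sqrt
    exact mul_le_mul hkle (Real.log_le_log hk0 hkle) hklog (by linarith)
  have hxD : |x - n * p| ≤ D := hx.trans (hgrow n hn0 (by linarith) hlogn)
  have hyD : |y - m * p| ≤ D := hy.trans (hgrow m hm0 (by linarith) hlogm)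
  have hxa : |x - n * p| ≤ (n:ℝ) * p / 2 := hx.trans keyn
  have hya : |y - m * p| ≤ (m:ℝ) * p / 2 := hy.trans keym
  have hcore := core_bound r s hr hs (mul_pos hn0 hp0) (mul_pos hm0 hp0) hxD hyD hxa hya
  rw [← hK] at hcore
  refine hcore.trans ?_
  -- rewrite the right hand side
  have hD2 : D ^ 2 = C' ^ 2 * (((n:ℝ) + m) * Real.log ((n:ℝ) + m)) := by
    rw [hD, mul_pow, Real.sq_sqrt (mul_nonneg (by linarith) hlognm)]
  have e1 : ((n:ℝ) * p) ^ (s - 2) = (n:ℝ) ^ (s - 2) * p ^ (s - 2) :=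
    Real.mul_rpow hn0.le hp0.le
  have e2 : ((n:ℝ) * p + (m:ℝ) * p) ^ (-r) = ((n:ℝ) + m) ^ (-r) * p ^ (-r) := by
    rw [show (n:ℝ) * p + (m:ℝ) * p = ((n:ℝ) + m) * p by ring, Real.mul_rpow hnm0.le hp0.le]
  have e3 : ((n:ℝ) + m) ^ ((1:ℝ) - r) = ((n:ℝ) + m) * ((n:ℝ) + m) ^ (-r) := by
    rw [show (1:ℝ) - r = 1 + -r by ring, Real.rpow_add hnm0, Real.rpow_one]
  have e4 : ((n:ℝ) + m) ^ ((1:ℝ) - r) = (((n:ℝ) + m) ^ (r - 1))⁻¹ := by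
    rw [show (1:ℝ) - r = -(r - 1) by ring, Real.rpow_neg hnm0.le]
  have lhs_eq : K * (D ^ 2 * (((n:ℝ) * p) ^ (s - 2) * ((n:ℝ) * p + (m:ℝ) * p) ^ (-r))) =
      C₀ * ((n:ℝ) ^ (s - 2) * Real.log ((n:ℝ) + m) * (((n:ℝ) + m) ^ (r - 1))⁻¹) := by
    rw [hD2, e1, e2, hC₀, ← e4, e3]
    ring
  rw [lhs_eq]
  have hX0 : 0 ≤ (n:ℝ) ^ (s - 2) * Real.log ((n:ℝ) + m) * (((n:ℝ) + m) ^ (r - 1))⁻¹ :=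
    mul_nonneg (mul_nonneg (Real.rpow_nonneg hn0.le _) hlognm)
      (inv_nonneg.mpr (Real.rpow_nonneg hnm0.le _))
  calc C₀ * ((n:ℝ) ^ (s - 2) * Real.log ((n:ℝ) + m) * (((n:ℝ) + m) ^ (r - 1))⁻¹)
      ≤ (C₀ + 1) * ((n:ℝ) ^ (s - 2) * Real.log ((n:ℝ) + m) * (((n:ℝ) + m) ^ (r - 1))⁻¹) :=
        mul_le_mul_of_nonneg_right (by linarith) hX0
  _ = (C₀ + 1) * (n:ℝ) ^ (s - 2) * Real.log ((n:ℝ) + m) / ((n:ℝ) + m) ^ (r - 1) := by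
        rw [div_eq_mul_inv]; ring
end

section
/- Let r, s > 0 and p ∈ (0,1) be constants and let f(x, y) = x^s/(x+y)^r. For each n let m = m(n) satisfy m(n)/n → ∞ and m(n)·log(m(n))/n^{3/2} → 0. Let X ~ Binomial(n, p) and Y ~ Binomial(m, p) be independent, and let Q(X, Y) = f(X, Y) − f(np, mp) − ∇f(np, mp)·(X − np, Y − mp) denote the first-order Taylor remainder. Then (m^r/n^{s−1/2})·Q(X, Y) converges to 0 in probability as n → ∞. -/
open MeasureTheory ProbabilityTheory Real Filter

noncomputable def kap (α : ℝ) : ℝ := |α| * ((2:ℝ) ^ (1 - α) + (2:ℝ) ^ (α - 1))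

lemma kap_nonneg (α : ℝ) : 0 ≤ kap α := by
  have h1 : (0:ℝ) ≤ (2:ℝ) ^ (1 - α) := Real.rpow_nonneg (by norm_num) _
  have h2 : (0:ℝ) ≤ (2:ℝ) ^ (α - 1) := Real.rpow_nonneg (by norm_num) _
  exact mul_nonneg (abs_nonneg _) (by linarith)

lemma rpow_base_le_of_mem {L U x β : ℝ} (hL : 0 < L) (hx : x ∈ Set.Icc L U) :
    x ^ β ≤ L ^ β + U ^ β := by
  rcases le_or_gt 0 β with hβ | hβ
  · have h := Real.rpow_le_rpow (hL.le.trans hx.1) hx.2 hβ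
    have : (0:ℝ) ≤ L ^ β := Real.rpow_nonneg hL.le _
    linarith
  · have h := Real.rpow_le_rpow_of_nonpos hL hx.1 hβ.le
    have : (0:ℝ) ≤ U ^ β := Real.rpow_nonneg (hL.le.trans (hx.1.trans hx.2)) _
    linarith

lemma abs_rpow_sub_rpow {L U : ℝ} (α : ℝ) (hL : 0 < L) {x y : ℝ}
    (hx : x ∈ Set.Icc L U) (hy : y ∈ Set.Icc L U) :
    |x ^ α - y ^ α| ≤ |α| * (L ^ (α - 1) + U ^ (α - 1)) * |x - y| := by
  have key := Convex.norm_image_sub_le_of_norm_hasDerivWithin_le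
    (f := fun t : ℝ => t ^ α) (f' := fun t : ℝ => α * t ^ (α - 1)) (s := Set.Icc L U)
    (C := |α| * (L ^ (α - 1) + U ^ (α - 1)))
    (fun t ht => (Real.hasDerivAt_rpow_const
      (Or.inl (ne_of_gt (lt_of_lt_of_le hL ht.1)))).hasDerivWithinAt)
    (fun t ht => by
      have htpos : 0 < t := lt_of_lt_of_le hL ht.1
      have : ‖α * t ^ (α - 1)‖ = |α| * t ^ (α - 1) := by
        rw [norm_mul, Real.norm_eq_abs, Real.norm_eq_abs,
          abs_of_nonneg (Real.rpow_nonneg htpos.le _)]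
      rw [this]
      exact mul_le_mul_of_nonneg_left (rpow_base_le_of_mem hL ht) (abs_nonneg _))
    (convex_Icc L U) hy hx
  simpa [Real.norm_eq_abs] using key

lemma rpow_window {α a x ρ : ℝ} (ha : 0 < a) (hmem : |x - a| ≤ ρ) (hhalf : ρ ≤ a / 2) :
    |x ^ α - a ^ α| ≤ kap α * a ^ (α - 1) * ρ := by
  have hρ : 0 ≤ ρ := le_trans (abs_nonneg _) hmem
  have hax := abs_le.1 hmem
  have hxmem : x ∈ Set.Icc (a / 2) (2 * a) := ⟨by linarith, by linarith⟩
  have hamem : a ∈ Set.Icc (a / 2) (2 * a) := ⟨by linarith, by linarith⟩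
  have key := abs_rpow_sub_rpow α (by linarith : (0:ℝ) < a / 2) hxmem hamem
  have e1 : (a / 2 : ℝ) ^ (α - 1) = (2:ℝ) ^ (1 - α) * a ^ (α - 1) := by
    rw [div_eq_mul_inv, Real.mul_rpow ha.le (by norm_num),
      Real.inv_rpow (by norm_num : (0:ℝ) ≤ 2), ← Real.rpow_neg (by norm_num : (0:ℝ) ≤ 2),
      show -(α - 1) = 1 - α by ring]
    ring
  have e2 : (2 * a : ℝ) ^ (α - 1) = (2:ℝ) ^ (α - 1) * a ^ (α - 1) :=
    Real.mul_rpow (by norm_num) ha.le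
  calc |x ^ α - a ^ α| ≤ |α| * ((a / 2) ^ (α - 1) + (2 * a) ^ (α - 1)) * |x - a| := key
    _ = kap α * a ^ (α - 1) * |x - a| := by rw [e1, e2, kap]; ring
    _ ≤ kap α * a ^ (α - 1) * ρ := by
        apply mul_le_mul_of_nonneg_left hmem
        exact mul_nonneg (kap_nonneg α) (Real.rpow_nonneg ha.le _)

lemma rpow_neg_window_le {β u c ρ : ℝ} (hc : 0 < c) (hβ : 0 ≤ β)
    (hmem : |u - c| ≤ ρ) (hhalf : ρ ≤ c / 2) :
    u ^ (-β) ≤ 2 ^ β * c ^ (-β) := by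
  have hu := abs_le.1 hmem
  have hu2 : c / 2 ≤ u := by linarith
  have h := Real.rpow_le_rpow_of_nonpos (by linarith : (0:ℝ) < c / 2) hu2 (neg_nonpos.2 hβ)
  calc u ^ (-β) ≤ (c / 2) ^ (-β) := h
    _ = 2 ^ β * c ^ (-β) := by
        rw [div_eq_mul_inv, Real.mul_rpow hc.le (by norm_num),
          Real.inv_rpow (by norm_num : (0:ℝ) ≤ 2), ← Real.rpow_neg (by norm_num : (0:ℝ) ≤ 2),
          show -(-β) = β by ring]
        ring


lemma prod_diff {α β a c x u ρ1 ρ : ℝ} (ha : 0 < a) (hc : 0 < c) (hβ : 0 ≤ β)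
    (hx : |x - a| ≤ ρ1) (hu : |u - c| ≤ ρ) (h1 : ρ1 ≤ a / 2) (h2 : ρ ≤ c / 2) :
    |x ^ α * u ^ (-β) - a ^ α * c ^ (-β)| ≤
      kap α * a ^ (α - 1) * ρ1 * (2 ^ β * c ^ (-β)) +
        a ^ α * (kap (-β) * c ^ (-β - 1) * ρ) := by
  have hρ1 : 0 ≤ ρ1 := le_trans (abs_nonneg _) hx
  have hρ : 0 ≤ ρ := le_trans (abs_nonneg _) hu
  have key : x ^ α * u ^ (-β) - a ^ α * c ^ (-β) =
      (x ^ α - a ^ α) * u ^ (-β) + a ^ α * (u ^ (-β) - c ^ (-β)) := by ring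
  rw [key]
  refine le_trans (abs_add_le _ _) (add_le_add ?_ ?_)
  · rw [abs_mul]
    have b1 := rpow_window (α := α) ha hx h1
    have b2 : |u ^ (-β)| ≤ 2 ^ β * c ^ (-β) := by
      rw [abs_of_nonneg (Real.rpow_nonneg (by cases abs_le.1 hu; nlinarith) _)]
      exact rpow_neg_window_le hc hβ hu h2
    exact mul_le_mul b1 b2 (abs_nonneg _)
      (mul_nonneg (mul_nonneg (kap_nonneg _) (Real.rpow_nonneg ha.le _)) hρ1)
  · rw [abs_mul, abs_of_nonneg (Real.rpow_nonneg ha.le α)]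
    apply mul_le_mul_of_nonneg_left _ (Real.rpow_nonneg ha.le α)
    have := rpow_window (α := -β) hc hu h2
    simpa [show (-β) - 1 = -β - 1 by ring] using this

noncomputable def fXc (r s x u : ℝ) : ℝ :=
  s * (x ^ (s - 1) * u ^ (-r)) - r * (x ^ s * u ^ (-(r + 1)))

noncomputable def fYc (r s x u : ℝ) : ℝ := -(r * (x ^ s * u ^ (-(r + 1))))

lemma fX_diff_bound (r s : ℝ) (hr : 0 < r) (hs : 0 < s) {a c x u ρ1 ρ : ℝ}
    (ha : 0 < a) (hc : 0 < c) (hx : |x - a| ≤ ρ1) (hu : |u - c| ≤ ρ)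
    (h1 : ρ1 ≤ a / 2) (h2 : ρ ≤ c / 2) :
    |fXc r s x u - fXc r s a c| ≤
      s * (kap (s-1) * a ^ (s-2) * ρ1 * (2 ^ r * c ^ (-r)) +
            a ^ (s-1) * (kap (-r) * c ^ (-r - 1) * ρ)) +
      r * (kap s * a ^ (s-1) * ρ1 * (2 ^ (r+1) * c ^ (-(r+1))) +
            a ^ s * (kap (-(r+1)) * c ^ (-(r+1) - 1) * ρ)) := by
  have key : fXc r s x u - fXc r s a c =
      s * (x ^ (s-1) * u ^ (-r) - a ^ (s-1) * c ^ (-r)) -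
        r * (x ^ s * u ^ (-(r+1)) - a ^ s * c ^ (-(r+1))) := by
    simp only [fXc]; ring
  rw [key]
  refine le_trans (abs_sub _ _) ?_
  rw [abs_mul, abs_mul, abs_of_pos hs, abs_of_pos hr]
  refine add_le_add (mul_le_mul_of_nonneg_left ?_ hs.le)
    (mul_le_mul_of_nonneg_left ?_ hr.le)
  · have := prod_diff (α := s - 1) (β := r) ha hc hr.le hx hu h1 h2
    simpa [show s - 1 - 1 = s - 2 by ring] using this
  · have := prod_diff (α := s) (β := r + 1) ha hc (by linarith) hx hu h1 h2
    simpa using this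

lemma fY_diff_bound (r s : ℝ) (hr : 0 < r) (hs : 0 < s) {a c x u ρ1 ρ : ℝ}
    (ha : 0 < a) (hc : 0 < c) (hx : |x - a| ≤ ρ1) (hu : |u - c| ≤ ρ)
    (h1 : ρ1 ≤ a / 2) (h2 : ρ ≤ c / 2) :
    |fYc r s x u - fYc r s a c| ≤
      r * (kap s * a ^ (s-1) * ρ1 * (2 ^ (r+1) * c ^ (-(r+1))) +
            a ^ s * (kap (-(r+1)) * c ^ (-(r+1) - 1) * ρ)) := by
  have key : fYc r s x u - fYc r s a c =
      -(r * (x ^ s * u ^ (-(r+1)) - a ^ s * c ^ (-(r+1)))) := by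
    simp only [fYc]; ring
  rw [key, abs_neg, abs_mul, abs_of_pos hr]
  refine mul_le_mul_of_nonneg_left ?_ hr.le
  simpa using prod_diff (α := s) (β := r + 1) ha hc (by linarith) hx hu h1 h2

noncomputable def dcoord (A B : ℝ) : ℝ × ℝ →L[ℝ] ℝ :=
  A • ContinuousLinearMap.fst ℝ ℝ ℝ + B • ContinuousLinearMap.snd ℝ ℝ ℝ

@[simp] lemma dcoord_apply (A B : ℝ) (v : ℝ × ℝ) : dcoord A B v = A * v.1 + B * v.2 := by
  simp [dcoord]

lemma hasFDerivAt_ratioFunP (r s : ℝ) {x y : ℝ} (hx : 0 < x) (hu : 0 < x + y) :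
    HasFDerivAt (ratioFunP r s)
      (dcoord (fXc r s x (x + y)) (fYc r s x (x + y))) (x, y) := by
  have h1 : HasFDerivAt (fun q : ℝ × ℝ => q.1 ^ s)
      ((s * x ^ (s - 1)) • ContinuousLinearMap.fst ℝ ℝ ℝ) (x, y) :=
    (hasFDerivAt_fst (p := ((x, y) : ℝ × ℝ))).rpow_const (Or.inl hx.ne')
  have h2 : HasFDerivAt (fun q : ℝ × ℝ => (q.1 + q.2) ^ (-r))
      ((-r * (x + y) ^ (-r - 1)) •
        (ContinuousLinearMap.fst ℝ ℝ ℝ + ContinuousLinearMap.snd ℝ ℝ ℝ)) (x, y) :=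
    ((hasFDerivAt_fst (p := ((x, y) : ℝ × ℝ))).add
      (hasFDerivAt_snd (p := ((x, y) : ℝ × ℝ)))).rpow_const (Or.inl hu.ne')
  have h3 := h1.mul h2
  have heq : (fun q : ℝ × ℝ => q.1 ^ s * (q.1 + q.2) ^ (-r)) =ᶠ[nhds ((x, y) : ℝ × ℝ)]
      ratioFunP r s := by
    have hopen : IsOpen {q : ℝ × ℝ | 0 < q.1 + q.2} :=
      isOpen_lt continuous_const (continuous_fst.add continuous_snd)
    filter_upwards [hopen.mem_nhds (by exact hu)] with q hq
    simp only [ratioFunP, Real.rpow_neg (le_of_lt hq), div_eq_mul_inv]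
  have h4 := h3.congr_of_eventuallyEq heq.symm
  refine h4.congr_fderiv (Eq.symm ?_)
  ext v
  · simp [fXc, fYc, dcoord]
    rw [show (-1 + -r : ℝ) = -r - 1 by ring]; ring
  · simp [fXc, fYc, dcoord]
    rw [show (-1 + -r : ℝ) = -r - 1 by ring]; ring

lemma key_MVT (r s : ℝ) {a b x y ρ1 ρ2 Cx Cy : ℝ} (ha : 0 < a) (hc : 0 < a + b)
    (hx : |x - a| ≤ ρ1) (hy : |y - b| ≤ ρ2) (h1 : ρ1 ≤ a / 2) (h2 : ρ1 + ρ2 ≤ (a + b) / 2)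
    (hbx : ∀ x' u', |x' - a| ≤ ρ1 → |u' - (a + b)| ≤ ρ1 + ρ2 →
      |fXc r s x' u' - fXc r s a (a + b)| ≤ Cx)
    (hby : ∀ x' u', |x' - a| ≤ ρ1 → |u' - (a + b)| ≤ ρ1 + ρ2 →
      |fYc r s x' u' - fYc r s a (a + b)| ≤ Cy) :
    |taylorRem r s a b x y| ≤ Cx * ρ1 + Cy * ρ2 := by
  have hρ1 : 0 ≤ ρ1 := le_trans (abs_nonneg _) hx
  have hρ2 : 0 ≤ ρ2 := le_trans (abs_nonneg _) hy
  set dx := x - a with hdx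
  set dy := y - b with hdy
  set A0 := fXc r s a (a + b) with hA0
  set B0 := fYc r s a (a + b) with hB0
  set g : ℝ → ℝ := fun t => ratioFunP r s (a + t * dx, b + t * dy) - t * (A0 * dx + B0 * dy)
    with hg
  -- coordinates along the segment
  have hcoord : ∀ t ∈ Set.Icc (0:ℝ) 1,
      0 < a + t * dx ∧ 0 < (a + t * dx) + (b + t * dy) ∧
      |(a + t * dx) - a| ≤ ρ1 ∧ |((a + t * dx) + (b + t * dy)) - (a + b)| ≤ ρ1 + ρ2 := by
    intro t ht
    have h1' : |t * dx| ≤ ρ1 := by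
      rw [abs_mul, abs_of_nonneg ht.1]
      calc t * |dx| ≤ 1 * |dx| := by
            apply mul_le_mul_of_nonneg_right ht.2 (abs_nonneg _)
        _ ≤ ρ1 := by rw [one_mul]; exact hx
    have h2' : |t * dx + t * dy| ≤ ρ1 + ρ2 := by
      refine le_trans (abs_add_le _ _) (add_le_add h1' ?_)
      rw [abs_mul, abs_of_nonneg ht.1]
      calc t * |dy| ≤ 1 * |dy| := mul_le_mul_of_nonneg_right ht.2 (abs_nonneg _)
        _ ≤ ρ2 := by rw [one_mul]; exact hy
    have hb1 := abs_le.1 h1'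
    have hb2 := abs_le.1 h2'
    refine ⟨by linarith, by linarith [h2'], ?_, ?_⟩
    · simpa using h1'
    · have : (a + t * dx) + (b + t * dy) - (a + b) = t * dx + t * dy := by ring
      rw [this]; exact h2'
  -- derivative of g
  have hderiv : ∀ t ∈ Set.Icc (0:ℝ) 1,
      HasDerivWithinAt g
        ((fXc r s (a + t * dx) ((a + t * dx) + (b + t * dy)) * dx +
          fYc r s (a + t * dx) ((a + t * dx) + (b + t * dy)) * dy) - (A0 * dx + B0 * dy))
        (Set.Icc (0:ℝ) 1) t := by
    intro t ht
    obtain ⟨hp1, hp2, -, -⟩ := hcoord t ht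
    have hcurve : HasDerivAt (fun t : ℝ => ((a + t * dx, b + t * dy) : ℝ × ℝ)) (dx, dy) t := by
      simpa using (((hasDerivAt_id t).mul_const dx).const_add a).prodMk
        (((hasDerivAt_id t).mul_const dy).const_add b)
    have hF := hasFDerivAt_ratioFunP r s hp1 hp2
    have hcomp := hF.comp_hasDerivAt t hcurve
    have : HasDerivAt (fun t : ℝ => ratioFunP r s (a + t * dx, b + t * dy))
        (fXc r s (a + t * dx) ((a + t * dx) + (b + t * dy)) * dx +
          fYc r s (a + t * dx) ((a + t * dx) + (b + t * dy)) * dy) t := by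
      have h := hcomp; simp at h; exact h
    have hlin : HasDerivAt (fun t : ℝ => t * (A0 * dx + B0 * dy)) (A0 * dx + B0 * dy) t := by
      simpa using (hasDerivAt_id t).mul_const (A0 * dx + B0 * dy)
    exact ((this.sub hlin)).hasDerivWithinAt
  -- bound on the derivative
  have hbound : ∀ t ∈ Set.Ico (0:ℝ) 1,
      ‖(fXc r s (a + t * dx) ((a + t * dx) + (b + t * dy)) * dx +
        fYc r s (a + t * dx) ((a + t * dx) + (b + t * dy)) * dy) - (A0 * dx + B0 * dy)‖
        ≤ Cx * ρ1 + Cy * ρ2 := by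
    intro t ht
    obtain ⟨-, -, hm1, hm2⟩ := hcoord t ⟨ht.1, ht.2.le⟩
    rw [Real.norm_eq_abs]
    have e : (fXc r s (a + t * dx) ((a + t * dx) + (b + t * dy)) * dx +
        fYc r s (a + t * dx) ((a + t * dx) + (b + t * dy)) * dy) - (A0 * dx + B0 * dy) =
        (fXc r s (a + t * dx) ((a + t * dx) + (b + t * dy)) - A0) * dx +
        (fYc r s (a + t * dx) ((a + t * dx) + (b + t * dy)) - B0) * dy := by ring
    rw [e]
    refine le_trans (abs_add_le _ _) (add_le_add ?_ ?_)
    · rw [abs_mul]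
      exact mul_le_mul (hbx _ _ hm1 hm2) hx (abs_nonneg _)
        (le_trans (abs_nonneg _) (hbx _ _ hm1 hm2))
    · rw [abs_mul]
      exact mul_le_mul (hby _ _ hm1 hm2) hy (abs_nonneg _)
        (le_trans (abs_nonneg _) (hby _ _ hm1 hm2))
  have key := norm_image_sub_le_of_norm_deriv_le_segment_01' hderiv hbound
  -- identify g 1 - g 0 with taylorRem
  have hfd : fderiv ℝ (ratioFunP r s) (a, b) = dcoord A0 B0 :=
    (hasFDerivAt_ratioFunP r s ha hc).fderiv
  have hg1 : g 1 = ratioFunP r s (x, y) - (A0 * dx + B0 * dy) := by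
    have e1 : a + dx = x := by rw [hdx]; ring
    have e2 : b + dy = y := by rw [hdy]; ring
    simp only [hg, one_mul, e1, e2]
  have hg0 : g 0 = ratioFunP r s (a, b) := by simp [hg]
  have hrem : taylorRem r s a b x y = g 1 - g 0 := by
    rw [hg1, hg0, taylorRem, hfd]
    simp only [dcoord_apply]
    ring
  rw [hrem]
  simpa [Real.norm_eq_abs] using key

lemma core_est {N M p : ℝ} (hN : 1 ≤ N) (hNM : N ≤ M) (hp : 0 < p) (r α β γ δ : ℝ) (s : ℝ)
    (hβ : 0 ≤ β) (hsum : 1/2 - s + α + γ + (r - β + δ) ≤ -(1/10))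
    (hMexp : r - β + δ ≤ 0) :
    M ^ r / N ^ (s - 1/2) * ((N * p) ^ α * ((N * p + M * p) ^ (-β) * (N ^ γ * M ^ δ)))
      ≤ p ^ (α - β) * N ^ (-(1/10) : ℝ) := by
  have hN0 : (0:ℝ) < N := lt_of_lt_of_le one_pos hN
  have hM0 : (0:ℝ) < M := lt_of_lt_of_le hN0 hNM
  have hMp : (0:ℝ) < M * p := mul_pos hM0 hp
  have h1 : (N * p + M * p) ^ (-β) ≤ (M * p) ^ (-β) :=
    Real.rpow_le_rpow_of_nonpos hMp (by nlinarith) (neg_nonpos.2 hβ)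
  have hS : (0:ℝ) ≤ M ^ r / N ^ (s - 1/2) :=
    div_nonneg (Real.rpow_nonneg hM0.le _) (Real.rpow_nonneg hN0.le _)
  have step1 : M ^ r / N ^ (s - 1/2) * ((N * p) ^ α * ((N * p + M * p) ^ (-β) * (N ^ γ * M ^ δ)))
      ≤ M ^ r / N ^ (s - 1/2) * ((N * p) ^ α * ((M * p) ^ (-β) * (N ^ γ * M ^ δ))) := by
    apply mul_le_mul_of_nonneg_left _ hS
    apply mul_le_mul_of_nonneg_left _ (Real.rpow_nonneg (by positivity) _)
    apply mul_le_mul_of_nonneg_right h1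
    exact mul_nonneg (Real.rpow_nonneg hN0.le _) (Real.rpow_nonneg hM0.le _)
  have step2 : M ^ r / N ^ (s - 1/2) * ((N * p) ^ α * ((M * p) ^ (-β) * (N ^ γ * M ^ δ)))
      = p ^ (α - β) * (N ^ (1/2 - s + α + γ) * M ^ (r - β + δ)) := by
    rw [Real.mul_rpow hN0.le hp.le, Real.mul_rpow hM0.le hp.le,
      Real.rpow_neg hM0.le, Real.rpow_neg hp.le,
      Real.rpow_sub hp, Real.rpow_add hN0 (1/2 - s + α) γ, Real.rpow_add hN0 (1/2 - s) α,
      Real.rpow_sub hN0 (1/2) s,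
      Real.rpow_add hM0 (r - β) δ, Real.rpow_sub hM0 r β, Real.rpow_sub hN0 s (1/2)]
    field_simp
  have step3 : p ^ (α - β) * (N ^ (1/2 - s + α + γ) * M ^ (r - β + δ))
      ≤ p ^ (α - β) * N ^ (-(1/10) : ℝ) := by
    apply mul_le_mul_of_nonneg_left _ (Real.rpow_nonneg hp.le _)
    have hM2 : M ^ (r - β + δ) ≤ N ^ (r - β + δ) :=
      Real.rpow_le_rpow_of_nonpos hN0 hNM hMexp
    calc N ^ (1/2 - s + α + γ) * M ^ (r - β + δ)
        ≤ N ^ (1/2 - s + α + γ) * N ^ (r - β + δ) :=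
          mul_le_mul_of_nonneg_left hM2 (Real.rpow_nonneg hN0.le _)
      _ = N ^ (1/2 - s + α + γ + (r - β + δ)) := (Real.rpow_add hN0 _ _).symm
      _ ≤ N ^ (-(1/10) : ℝ) := Real.rpow_le_rpow_of_exponent_le hN hsum
  calc _ ≤ _ := step1
    _ = _ := step2
    _ ≤ _ := step3

noncomputable def Kconst (r s p : ℝ) : ℝ :=
  (s * kap (s-1) * 2 ^ (r:ℝ) + 2 * s * kap (-r) + 2 * r * kap s * 2 ^ (r+1) +
    4 * r * kap (-(r+1))) * p ^ (s - 2 - r)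

lemma Kconst_nonneg (r s p : ℝ) (hr : 0 < r) (hs : 0 < s) (hp : 0 < p) :
    0 ≤ Kconst r s p := by
  have k1 := kap_nonneg (s-1); have k2 := kap_nonneg (-r); have k3 := kap_nonneg s
  have k4 := kap_nonneg (-(r+1))
  have t1 : (0:ℝ) ≤ 2 ^ (r:ℝ) := Real.rpow_nonneg (by norm_num) _
  have t2 : (0:ℝ) ≤ 2 ^ (r+1:ℝ) := Real.rpow_nonneg (by norm_num) _
  have : (0:ℝ) ≤ p ^ (s - 2 - r) := Real.rpow_nonneg hp.le _
  apply mul_nonneg _ this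
  have h1 : 0 ≤ s * kap (s-1) * 2 ^ (r:ℝ) := by positivity
  have h2 : 0 ≤ 2 * s * kap (-r) := by positivity
  have h3 : 0 ≤ 2 * r * kap s * 2 ^ (r+1:ℝ) := by positivity
  have h4 : 0 ≤ 4 * r * kap (-(r+1)) := by positivity
  linarith

lemma assemble_mono {S A C : ℝ} (hS : 0 ≤ S) (hA : 0 ≤ A) (hC : 0 ≤ C) {u v : ℝ}
    (h : u ≤ v) : S * (A * (C * u)) ≤ S * (A * (C * v)) :=
  mul_le_mul_of_nonneg_left (mul_le_mul_of_nonneg_left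
    (mul_le_mul_of_nonneg_left h hC) hA) hS

lemma assemble (s r : ℝ) (hs : 0 < s) (hr : 0 < r)
    {S A2 A1 A0 C0 C1 C2 ρ1 ρ2 k1 k2 k3 k4 t0 t1 E1 E2 E4 : ℝ}
    (hS : 0 ≤ S) (hA2 : 0 ≤ A2) (hA1 : 0 ≤ A1) (hA0 : 0 ≤ A0)
    (hC0 : 0 ≤ C0) (hC1 : 0 ≤ C1) (hC2 : 0 ≤ C2)
    (hk1 : 0 ≤ k1) (hk2 : 0 ≤ k2) (hk3 : 0 ≤ k3) (hk4 : 0 ≤ k4)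
    (ht0 : 0 ≤ t0) (ht1 : 0 ≤ t1)
    (hρ1 : 0 ≤ ρ1) (hρ12 : ρ1 ≤ ρ2)
    (hE1 : S * (A2 * (C0 * (ρ1 * ρ1))) ≤ E1)
    (hE2 : S * (A1 * (C1 * (ρ2 * ρ1))) ≤ E2)
    (hE4 : S * (A0 * (C2 * (ρ2 * ρ2))) ≤ E4) :
    S * ((s * (k1 * A2 * ρ1 * (t0 * C0) + A1 * (k2 * C1 * (ρ1 + ρ2))) +
          r * (k3 * A1 * ρ1 * (t1 * C1) + A0 * (k4 * C2 * (ρ1 + ρ2)))) * ρ1 +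
        (r * (k3 * A1 * ρ1 * (t1 * C1) + A0 * (k4 * C2 * (ρ1 + ρ2)))) * ρ2)
      ≤ (s * k1 * t0) * E1 + (2 * s * k2) * E2 + (2 * r * k3 * t1) * E2 + (4 * r * k4) * E4 := by
  have hρ2 : 0 ≤ ρ2 := le_trans hρ1 hρ12
  have p1 : S * (A2 * (C0 * (ρ1 * ρ1))) ≤ E1 := hE1
  have p2 : S * (A1 * (C1 * ((ρ1 + ρ2) * ρ1))) ≤ 2 * E2 := by
    calc S * (A1 * (C1 * ((ρ1 + ρ2) * ρ1)))
        ≤ S * (A1 * (C1 * (2 * (ρ2 * ρ1)))) :=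
          assemble_mono hS hA1 hC1 (by nlinarith)
      _ = 2 * (S * (A1 * (C1 * (ρ2 * ρ1)))) := by ring
      _ ≤ 2 * E2 := by linarith
  have p3 : S * (A1 * (C1 * (ρ1 * ρ1))) ≤ E2 :=
    le_trans (assemble_mono hS hA1 hC1 (by nlinarith)) hE2
  have p5 : S * (A1 * (C1 * (ρ1 * ρ2))) ≤ E2 :=
    le_trans (assemble_mono hS hA1 hC1 (by nlinarith)) hE2
  have p4 : S * (A0 * (C2 * ((ρ1 + ρ2) * ρ1))) ≤ 2 * E4 := by
    calc S * (A0 * (C2 * ((ρ1 + ρ2) * ρ1)))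
        ≤ S * (A0 * (C2 * (2 * (ρ2 * ρ2)))) :=
          assemble_mono hS hA0 hC2 (by nlinarith)
      _ = 2 * (S * (A0 * (C2 * (ρ2 * ρ2)))) := by ring
      _ ≤ 2 * E4 := by linarith
  have p6 : S * (A0 * (C2 * ((ρ1 + ρ2) * ρ2))) ≤ 2 * E4 := by
    calc S * (A0 * (C2 * ((ρ1 + ρ2) * ρ2)))
        ≤ S * (A0 * (C2 * (2 * (ρ2 * ρ2)))) :=
          assemble_mono hS hA0 hC2 (by nlinarith)
      _ = 2 * (S * (A0 * (C2 * (ρ2 * ρ2)))) := by ring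
      _ ≤ 2 * E4 := by linarith
  have decomp : S * ((s * (k1 * A2 * ρ1 * (t0 * C0) + A1 * (k2 * C1 * (ρ1 + ρ2))) +
          r * (k3 * A1 * ρ1 * (t1 * C1) + A0 * (k4 * C2 * (ρ1 + ρ2)))) * ρ1 +
        (r * (k3 * A1 * ρ1 * (t1 * C1) + A0 * (k4 * C2 * (ρ1 + ρ2)))) * ρ2) =
      (s * k1 * t0) * (S * (A2 * (C0 * (ρ1 * ρ1)))) +
      (s * k2) * (S * (A1 * (C1 * ((ρ1 + ρ2) * ρ1)))) +
      (r * k3 * t1) * (S * (A1 * (C1 * (ρ1 * ρ1)))) +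
      (r * k3 * t1) * (S * (A1 * (C1 * (ρ1 * ρ2)))) +
      (r * k4) * (S * (A0 * (C2 * ((ρ1 + ρ2) * ρ1)))) +
      (r * k4) * (S * (A0 * (C2 * ((ρ1 + ρ2) * ρ2)))) := by ring
  rw [decomp]
  have c1 : (s * k1 * t0) * (S * (A2 * (C0 * (ρ1 * ρ1)))) ≤ (s * k1 * t0) * E1 :=
    mul_le_mul_of_nonneg_left p1 (by positivity)
  have c2 : (s * k2) * (S * (A1 * (C1 * ((ρ1 + ρ2) * ρ1)))) ≤ (s * k2) * (2 * E2) :=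
    mul_le_mul_of_nonneg_left p2 (by positivity)
  have c3 : (r * k3 * t1) * (S * (A1 * (C1 * (ρ1 * ρ1)))) ≤ (r * k3 * t1) * E2 :=
    mul_le_mul_of_nonneg_left p3 (by positivity)
  have c5 : (r * k3 * t1) * (S * (A1 * (C1 * (ρ1 * ρ2)))) ≤ (r * k3 * t1) * E2 :=
    mul_le_mul_of_nonneg_left p5 (by positivity)
  have c4 : (r * k4) * (S * (A0 * (C2 * ((ρ1 + ρ2) * ρ1)))) ≤ (r * k4) * (2 * E4) :=
    mul_le_mul_of_nonneg_left p4 (by positivity)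
  have c6 : (r * k4) * (S * (A0 * (C2 * ((ρ1 + ρ2) * ρ2)))) ≤ (r * k4) * (2 * E4) :=
    mul_le_mul_of_nonneg_left p6 (by positivity)
  linarith

set_option maxHeartbeats 1000000 in
lemma scaled_bound (r s p : ℝ) (hr : 0 < r) (hs : 0 < s) (hp : 0 < p)
    {N M x y : ℝ} (hN : 1 ≤ N) (hNM : N ≤ M)
    (hh1 : N ^ (7/10:ℝ) ≤ N * p / 2)
    (hh2 : N ^ (7/10:ℝ) + M ^ (7/10:ℝ) ≤ (N * p + M * p) / 2)
    (hx : |x - N * p| ≤ N ^ (7/10:ℝ)) (hy : |y - M * p| ≤ M ^ (7/10:ℝ)) :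
    |M ^ r / N ^ (s - 1/2) * taylorRem r s (N * p) (M * p) x y| ≤
      Kconst r s p * N ^ (-(1/10) : ℝ) := by
  have hN0 : (0:ℝ) < N := lt_of_lt_of_le one_pos hN
  have hM0 : (0:ℝ) < M := lt_of_lt_of_le hN0 hNM
  have ha : 0 < N * p := mul_pos hN0 hp
  have hb : 0 < M * p := mul_pos hM0 hp
  have hc : 0 < N * p + M * p := by linarith
  have hρ12 : N ^ (7/10:ℝ) ≤ M ^ (7/10:ℝ) := Real.rpow_le_rpow hN0.le hNM (by norm_num)
  have hρ1pos : 0 < N ^ (7/10:ℝ) := Real.rpow_pos_of_pos hN0 _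
  have hQ : |taylorRem r s (N * p) (M * p) x y| ≤
      (s * (kap (s-1) * (N*p) ^ (s-2) * N ^ (7/10:ℝ) *
          (2 ^ (r:ℝ) * (N*p + M*p) ^ (-r)) +
        (N*p) ^ (s-1) * (kap (-r) * (N*p + M*p) ^ (-r - 1) *
          (N ^ (7/10:ℝ) + M ^ (7/10:ℝ)))) +
      r * (kap s * (N*p) ^ (s-1) * N ^ (7/10:ℝ) *
          (2 ^ (r+1:ℝ) * (N*p + M*p) ^ (-(r+1))) +
        (N*p) ^ s * (kap (-(r+1)) * (N*p + M*p) ^ (-(r+1) - 1) *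
          (N ^ (7/10:ℝ) + M ^ (7/10:ℝ))))) * N ^ (7/10:ℝ) +
      (r * (kap s * (N*p) ^ (s-1) * N ^ (7/10:ℝ) *
          (2 ^ (r+1:ℝ) * (N*p + M*p) ^ (-(r+1))) +
        (N*p) ^ s * (kap (-(r+1)) * (N*p + M*p) ^ (-(r+1) - 1) *
          (N ^ (7/10:ℝ) + M ^ (7/10:ℝ))))) * M ^ (7/10:ℝ) := by
    apply key_MVT r s ha hc hx hy hh1 hh2
    · intro x' u' hx' hu'
      exact fX_diff_bound r s hr hs ha hc hx' hu' hh1 hh2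
    · intro x' u' hx' hu'
      exact fY_diff_bound r s hr hs ha hc hx' hu' hh1 hh2
  rw [show (-r - 1 : ℝ) = -(r+1) by ring, show (-(r+1) - 1 : ℝ) = -(r+2) by ring] at hQ
  have hS : (0:ℝ) ≤ M ^ r / N ^ (s - 1/2) :=
    div_nonneg (Real.rpow_nonneg hM0.le _) (Real.rpow_nonneg hN0.le _)
  rw [abs_mul, abs_of_nonneg hS]
  -- core estimates
  have hρ1sq : N ^ (7/10:ℝ) * N ^ (7/10:ℝ) = N ^ (7/5 : ℝ) := by
    rw [← Real.rpow_add hN0]; norm_num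
  have hρ2sq : M ^ (7/10:ℝ) * M ^ (7/10:ℝ) = M ^ (7/5 : ℝ) := by
    rw [← Real.rpow_add hM0]; norm_num
  have E1 := core_est hN hNM hp r (s-2) r (7/5) 0 s hr.le (by norm_num) (by norm_num)
  have E2 := core_est hN hNM hp r (s-1) (r+1) (7/10) (7/10) s (by linarith)
    (by norm_num) (by norm_num)
  have E4 := core_est hN hNM hp r s (r+2) 0 (7/5) s (by linarith) (by norm_num) (by norm_num)
  rw [show (s - 1 - (r+1) : ℝ) = s - 2 - r by ring] at E2
  rw [show (s - (r+2) : ℝ) = s - 2 - r by ring] at E4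
  have hE1 : M ^ r / N ^ (s - 1/2) * ((N*p) ^ (s-2) * ((N*p + M*p) ^ (-r) *
      (N ^ (7/10:ℝ) * N ^ (7/10:ℝ)))) ≤ p ^ (s - 2 - r) * N ^ (-(1/10):ℝ) := by
    rw [hρ1sq]
    calc M ^ r / N ^ (s - 1/2) * ((N*p) ^ (s-2) * ((N*p + M*p) ^ (-r) * N ^ (7/5:ℝ)))
        = M ^ r / N ^ (s - 1/2) * ((N*p) ^ (s-2) * ((N*p + M*p) ^ (-r) *
          (N ^ (7/5:ℝ) * M ^ (0:ℝ)))) := by rw [Real.rpow_zero, mul_one]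
      _ ≤ _ := E1
  have hE2 : M ^ r / N ^ (s - 1/2) * ((N*p) ^ (s-1) * ((N*p + M*p) ^ (-(r+1)) *
      (M ^ (7/10:ℝ) * N ^ (7/10:ℝ)))) ≤ p ^ (s - 2 - r) * N ^ (-(1/10):ℝ) := by
    calc M ^ r / N ^ (s - 1/2) * ((N*p) ^ (s-1) * ((N*p + M*p) ^ (-(r+1)) *
        (M ^ (7/10:ℝ) * N ^ (7/10:ℝ))))
        = M ^ r / N ^ (s - 1/2) * ((N*p) ^ (s-1) * ((N*p + M*p) ^ (-(r+1)) *
          (N ^ (7/10:ℝ) * M ^ (7/10:ℝ)))) := by ring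
      _ ≤ _ := E2
  have hE4 : M ^ r / N ^ (s - 1/2) * ((N*p) ^ s * ((N*p + M*p) ^ (-(r+2)) *
      (M ^ (7/10:ℝ) * M ^ (7/10:ℝ)))) ≤ p ^ (s - 2 - r) * N ^ (-(1/10):ℝ) := by
    rw [hρ2sq]
    calc M ^ r / N ^ (s - 1/2) * ((N*p) ^ s * ((N*p + M*p) ^ (-(r+2)) * M ^ (7/5:ℝ)))
        = M ^ r / N ^ (s - 1/2) * ((N*p) ^ s * ((N*p + M*p) ^ (-(r+2)) *
          (N ^ (0:ℝ) * M ^ (7/5:ℝ)))) := by rw [Real.rpow_zero, one_mul]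
      _ ≤ _ := E4
  have main := assemble s r hs hr hS (Real.rpow_nonneg ha.le (s-2))
    (Real.rpow_nonneg ha.le (s-1)) (Real.rpow_nonneg ha.le s)
    (Real.rpow_nonneg hc.le (-r)) (Real.rpow_nonneg hc.le (-(r+1)))
    (Real.rpow_nonneg hc.le (-(r+2)))
    (kap_nonneg (s-1)) (kap_nonneg (-r)) (kap_nonneg s) (kap_nonneg (-(r+1)))
    (Real.rpow_nonneg (by norm_num : (0:ℝ) ≤ 2) r)
    (Real.rpow_nonneg (by norm_num : (0:ℝ) ≤ 2) (r+1))
    hρ1pos.le hρ12 hE1 hE2 hE4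
  calc M ^ r / N ^ (s - 1/2) * |taylorRem r s (N * p) (M * p) x y|
      ≤ M ^ r / N ^ (s - 1/2) * _ := mul_le_mul_of_nonneg_left hQ hS
    _ ≤ (s * kap (s-1) * 2 ^ (r:ℝ)) * (p ^ (s - 2 - r) * N ^ (-(1/10):ℝ)) +
        (2 * s * kap (-r)) * (p ^ (s - 2 - r) * N ^ (-(1/10):ℝ)) +
        (2 * r * kap s * 2 ^ (r+1:ℝ)) * (p ^ (s - 2 - r) * N ^ (-(1/10):ℝ)) +
        (4 * r * kap (-(r+1))) * (p ^ (s - 2 - r) * N ^ (-(1/10):ℝ)) := main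
    _ = Kconst r s p * N ^ (-(1/10) : ℝ) := by rw [Kconst]; ring

lemma binom_mean (n : ℕ) (x y : ℝ) :
    ∑ k ∈ Finset.range (n+1), (k:ℝ) * (n.choose k) * x^k * y^(n-k)
      = n * x * (x+y)^(n-1) := by
  cases n with
  | zero => simp
  | succ n =>
    rw [Finset.sum_range_succ']
    have step : ∀ k ∈ Finset.range (n+1),
        ((k+1:ℕ):ℝ) * ((n+1).choose (k+1)) * x^(k+1) * y^(n+1-(k+1))
          = ((n+1:ℕ):ℝ) * x * ((n.choose k) * x^k * y^(n-k)) := by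
      intro k hk
      have hc : (n+1) * n.choose k = (n+1).choose (k+1) * (k+1) := Nat.add_one_mul_choose_eq n k
      have hcast : ((k+1:ℕ):ℝ) * ((n+1).choose (k+1)) = ((n+1:ℕ):ℝ) * (n.choose k) := by
        have := congrArg (fun t : ℕ => (t:ℝ)) hc
        push_cast at this ⊢
        linarith
      have hy : n + 1 - (k + 1) = n - k := by omega
      rw [hy, hcast]
      ring
    rw [Finset.sum_congr rfl step]
    simp only [Nat.cast_zero, zero_mul, add_zero]
    rw [← Finset.mul_sum]
    have hb : ∑ k ∈ Finset.range (n+1), (n.choose k : ℝ) * x^k * y^(n-k) = (x+y)^n := by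
      rw [add_pow]
      exact Finset.sum_congr rfl fun k _ => by ring
    rw [hb]
    norm_num

lemma binom_fac2 (n : ℕ) (x y : ℝ) :
    ∑ k ∈ Finset.range (n+1), (k:ℝ) * ((k:ℝ) - 1) * (n.choose k) * x^k * y^(n-k)
      = n * ((n:ℝ) - 1) * x^2 * (x+y)^(n-2) := by
  cases n with
  | zero => simp
  | succ n =>
    rw [Finset.sum_range_succ']
    have step : ∀ k ∈ Finset.range (n+1),
        ((k+1:ℕ):ℝ) * (((k+1:ℕ):ℝ) - 1) * ((n+1).choose (k+1)) * x^(k+1) * y^(n+1-(k+1))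
          = ((n+1:ℕ):ℝ) * x * ((k:ℝ) * (n.choose k) * x^k * y^(n-k)) := by
      intro k hk
      have hc : (n+1) * n.choose k = (n+1).choose (k+1) * (k+1) := Nat.add_one_mul_choose_eq n k
      have hcast : ((k+1:ℕ):ℝ) * ((n+1).choose (k+1)) = ((n+1:ℕ):ℝ) * (n.choose k) := by
        have := congrArg (fun t : ℕ => (t:ℝ)) hc
        push_cast at this ⊢
        linarith
      have hy : n + 1 - (k + 1) = n - k := by omega
      have hk1 : (((k+1:ℕ):ℝ) - 1) = (k:ℝ) := by push_cast; ring
      rw [hy, hk1]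
      calc ((k+1:ℕ):ℝ) * (k:ℝ) * ((n+1).choose (k+1)) * x^(k+1) * y^(n-k)
          = (((k+1:ℕ):ℝ) * ((n+1).choose (k+1))) * ((k:ℝ) * x^(k+1) * y^(n-k)) := by ring
        _ = (((n+1:ℕ):ℝ) * (n.choose k)) * ((k:ℝ) * x^(k+1) * y^(n-k)) := by rw [hcast]
        _ = ((n+1:ℕ):ℝ) * x * ((k:ℝ) * (n.choose k) * x^k * y^(n-k)) := by ring
    rw [Finset.sum_congr rfl step]
    simp only [Nat.cast_zero, zero_mul, add_zero]
    rw [← Finset.mul_sum, binom_mean n x y]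
    have h2 : (n+1) - 2 = n - 1 := by omega
    rw [h2]
    push_cast
    ring

lemma binom_plain (n : ℕ) (p : ℝ) :
    ∑ k ∈ Finset.range (n+1), (n.choose k : ℝ) * p^k * (1-p)^(n-k) = 1 := by
  have := add_pow p (1-p) n
  rw [show p + (1-p) = 1 by ring, one_pow] at this
  conv_rhs => rw [this]
  exact Finset.sum_congr rfl fun k _ => by ring

lemma binom_var (n : ℕ) (p : ℝ) :
    ∑ k ∈ Finset.range (n+1), ((k:ℝ) - n*p)^2 * ((n.choose k : ℝ) * p^k * (1-p)^(n-k))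
      = n * p * (1-p) := by
  have hm := binom_mean n p (1-p)
  have hf := binom_fac2 n p (1-p)
  rw [show p + (1-p) = 1 by ring, one_pow] at hm hf
  have key : ∑ k ∈ Finset.range (n+1), ((k:ℝ) - n*p)^2 * ((n.choose k : ℝ) * p^k * (1-p)^(n-k))
      = (∑ k ∈ Finset.range (n+1), (k:ℝ) * ((k:ℝ) - 1) * (n.choose k) * p^k * (1-p)^(n-k))
        + ((1 - 2*((n:ℝ)*p)) * (∑ k ∈ Finset.range (n+1), (k:ℝ) * (n.choose k) * p^k * (1-p)^(n-k))
          + ((n:ℝ)*p)^2 * (∑ k ∈ Finset.range (n+1), (n.choose k : ℝ) * p^k * (1-p)^(n-k))) := by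
    rw [Finset.mul_sum, Finset.mul_sum, ← Finset.sum_add_distrib, ← Finset.sum_add_distrib]
    exact Finset.sum_congr rfl fun k _ => by ring
  rw [key, hm, hf, binom_plain]
  ring

lemma binom_tail {Ω : Type*} [MeasurableSpace Ω] (P : Measure Ω) [IsProbabilityMeasure P]
    (X : Ω → ℕ) (n : ℕ) (p : ℝ) (hp0 : 0 < p) (hp1 : p < 1)
    (hdist : ∀ k, P {ω | X ω = k} =
      ENNReal.ofReal ((n.choose k : ℝ) * p ^ k * (1-p) ^ (n-k)))
    {t : ℝ} (ht : 0 < t) :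
    P {ω | t < |(X ω : ℝ) - n * p|} ≤ ENNReal.ofReal (n * p * (1-p) / t^2) := by
  set w : ℕ → ℝ := fun k => (n.choose k : ℝ) * p ^ k * (1-p) ^ (n-k) with hw'
  have hw : ∀ k, 0 ≤ w k := by
    intro k
    have h1p : (0:ℝ) ≤ 1 - p := by linarith
    have h2 : (0:ℝ) ≤ p := hp0.le
    exact mul_nonneg (mul_nonneg (by positivity) (by positivity)) (by positivity)
  set g : ℕ → ℝ := fun k => ((k:ℝ) - n*p)^2 / t^2 * w k with hg'
  have hgnn : ∀ k, 0 ≤ g k := fun k =>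
    mul_nonneg (div_nonneg (sq_nonneg _) (sq_nonneg _)) (hw k)
  have hsub : {ω | t < |(X ω : ℝ) - n * p|} ⊆
      ⋃ k : ℕ, {ω | X ω = k ∧ t < |(k:ℝ) - n * p|} := by
    intro ω hω
    exact Set.mem_iUnion.2 ⟨X ω, rfl, hω⟩
  have step1 : P {ω | t < |(X ω : ℝ) - n * p|} ≤
      ∑' k : ℕ, P {ω | X ω = k ∧ t < |(k:ℝ) - n * p|} :=
    le_trans (measure_mono hsub) (measure_iUnion_le _)
  have step2 : ∀ k : ℕ, P {ω | X ω = k ∧ t < |(k:ℝ) - n * p|} ≤ ENNReal.ofReal (g k) := by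
    intro k
    by_cases hk : t < |(k:ℝ) - n * p|
    · have he : {ω | X ω = k ∧ t < |(k:ℝ) - n * p|} = {ω | X ω = k} := by
        ext ω; simp [hk]
      rw [he, hdist k]
      apply ENNReal.ofReal_le_ofReal
      have h1 : 1 ≤ ((k:ℝ) - n*p)^2 / t^2 := by
        rw [le_div_iff₀ (by positivity)]
        have := abs_nonneg ((k:ℝ) - n*p)
        nlinarith [sq_abs ((k:ℝ) - n*p)]
      calc w k = 1 * w k := (one_mul _).symm
        _ ≤ ((k:ℝ) - n*p)^2 / t^2 * w k := mul_le_mul_of_nonneg_right h1 (hw k)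
    · have he : {ω | X ω = k ∧ t < |(k:ℝ) - n * p|} = ∅ := by
        ext ω; simp [hk]
      rw [he]
      simp [hgnn k]
  have step3 : ∑' k : ℕ, P {ω | X ω = k ∧ t < |(k:ℝ) - n * p|} ≤
      ∑' k : ℕ, ENNReal.ofReal (g k) := ENNReal.tsum_le_tsum step2
  have hzero : ∀ k ∉ Finset.range (n+1), ENNReal.ofReal (g k) = 0 := by
    intro k hk
    have hkn : n < k := by simpa [Finset.mem_range] using hk
    have : n.choose k = 0 := Nat.choose_eq_zero_of_lt hkn
    simp [hg', hw', this]
  have step4 : ∑' k : ℕ, ENNReal.ofReal (g k) =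
      ∑ k ∈ Finset.range (n+1), ENNReal.ofReal (g k) := tsum_eq_sum hzero
  have step5 : ∑ k ∈ Finset.range (n+1), ENNReal.ofReal (g k) =
      ENNReal.ofReal (∑ k ∈ Finset.range (n+1), g k) :=
    (ENNReal.ofReal_sum_of_nonneg fun k _ => hgnn k).symm
  have step6 : ∑ k ∈ Finset.range (n+1), g k = n * p * (1-p) / t^2 := by
    have expand : ∀ k ∈ Finset.range (n+1), g k = (1/t^2) * (((k:ℝ) - n*p)^2 * w k) := by
      intro k _; simp only [hg']; ring
    rw [Finset.sum_congr rfl expand, ← Finset.mul_sum, hw', binom_var]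
    ring
  calc P {ω | t < |(X ω : ℝ) - n * p|} ≤ ∑' k : ℕ, ENNReal.ofReal (g k) :=
        le_trans step1 step3
    _ = ENNReal.ofReal (n * p * (1-p) / t^2) := by rw [step4, step5, step6]

/-- Let `r, s > 0`, `p ∈ (0,1)`, and suppose `m n / n → ∞` and
`m n · log(m n) / n^(3/2) → 0`. For `X n ~ Binomial(n, p)` and `Y n ~ Binomial(m n, p)`
independent, the scaled Taylor remainder `(m^r / n^(s−1/2)) · Q(X, Y)` of
`f(x,y) = x^s/(x+y)^r` about `(np, mp)` converges to `0` in probability. -/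
theorem scaled_taylorRem_to_zero_in_prob_m_over_n_to_infty
    {Ω : Type*} [MeasurableSpace Ω] (P : Measure Ω) [IsProbabilityMeasure P]
    (r s p : ℝ) (hr : 0 < r) (hs : 0 < s) (hp0 : 0 < p) (hp1 : p < 1)
    (m : ℕ → ℕ)
    (hm1 : Tendsto (fun n : ℕ => (m n : ℝ) / (n : ℝ)) atTop atTop)
    (hm2 : Tendsto (fun n : ℕ => (m n : ℝ) * Real.log (m n) / (n : ℝ) ^ ((3 : ℝ) / 2))
      atTop (nhds 0))
    (X Y : ℕ → Ω → ℕ)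
    (hXmeas : ∀ n, Measurable (X n)) (hYmeas : ∀ n, Measurable (Y n))
    (hXdist : ∀ n k, P {ω | X n ω = k} =
      ENNReal.ofReal ((n.choose k : ℝ) * p ^ k * (1 - p) ^ (n - k)))
    (hYdist : ∀ n k, P {ω | Y n ω = k} =
      ENNReal.ofReal (((m n).choose k : ℝ) * p ^ k * (1 - p) ^ (m n - k)))
    (hindep : ∀ n, IndepFun (X n) (Y n) P) :
    ∀ ε > (0 : ℝ),
      Tendsto (fun n : ℕ =>
          P {ω | ε < |(m n : ℝ) ^ r / (n : ℝ) ^ (s - 1/2) *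
            taylorRem r s (n * p) (m n * p) (X n ω : ℝ) (Y n ω : ℝ)|})
        atTop (nhds 0) := by
  intro ε hε
  have hNpos : ∀ᶠ n : ℕ in atTop, 1 ≤ (n:ℝ) := by
    filter_upwards [eventually_ge_atTop 1] with n hn
    exact_mod_cast hn
  have hmn : ∀ᶠ n : ℕ in atTop, (n:ℝ) ≤ (m n : ℝ) := by
    filter_upwards [hm1.eventually_ge_atTop 1, hNpos] with n hn hn1
    have hN : (0:ℝ) < (n:ℝ) := by linarith
    rw [le_div_iff₀ hN] at hn
    linarith
  have hmtop : Tendsto (fun n : ℕ => (m n : ℝ)) atTop atTop :=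
    tendsto_atTop_mono' atTop hmn tendsto_natCast_atTop_atTop
  have hm1' : ∀ᶠ n : ℕ in atTop, 1 ≤ (m n : ℝ) := by
    filter_upwards [hmn, hNpos] with n h1 h2; linarith
  -- window conditions hold eventually
  have t3 : Tendsto (fun n : ℕ => ((n:ℝ)) ^ (-(3/10):ℝ)) atTop (nhds 0) :=
    (tendsto_rpow_neg_atTop (by norm_num)).comp tendsto_natCast_atTop_atTop
  have t3m : Tendsto (fun n : ℕ => ((m n :ℝ)) ^ (-(3/10):ℝ)) atTop (nhds 0) :=
    (tendsto_rpow_neg_atTop (by norm_num)).comp hmtop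
  have hwin : ∀ (N : ℝ), 1 ≤ N → N ^ (-(3/10):ℝ) < p/2 → N ^ ((7/10):ℝ) ≤ N * p / 2 := by
    intro N h1 h2
    have hN0 : (0:ℝ) < N := by linarith
    have e : N ^ ((7/10):ℝ) = N ^ (-(3/10):ℝ) * N := by
      rw [show N ^ (-(3/10):ℝ) * N = N ^ (-(3/10):ℝ) * N ^ (1:ℝ) by rw [Real.rpow_one],
        ← Real.rpow_add hN0]
      norm_num
    rw [e]
    calc N ^ (-(3/10):ℝ) * N ≤ (p/2) * N :=
          mul_le_mul_of_nonneg_right h2.le (by linarith)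
      _ = N * p / 2 := by ring
  have hC3 : ∀ᶠ n : ℕ in atTop, ((n:ℝ)) ^ ((7/10):ℝ) ≤ (n:ℝ) * p / 2 := by
    filter_upwards [hNpos, t3.eventually (gt_mem_nhds (by positivity : (0:ℝ) < p/2))]
      with n h1 h2
    exact hwin _ h1 h2
  have hC3m : ∀ᶠ n : ℕ in atTop, ((m n:ℝ)) ^ ((7/10):ℝ) ≤ (m n:ℝ) * p / 2 := by
    filter_upwards [hm1', t3m.eventually (gt_mem_nhds (by positivity : (0:ℝ) < p/2))]
      with n h1 h2
    exact hwin _ h1 h2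
  have tK : Tendsto (fun n : ℕ => Kconst r s p * (n:ℝ) ^ (-(1/10):ℝ)) atTop (nhds 0) := by
    have h := ((tendsto_rpow_neg_atTop (by norm_num : (0:ℝ) < 1/10)).comp
      tendsto_natCast_atTop_atTop).const_mul (Kconst r s p)
    simpa using h
  have hC5 : ∀ᶠ n : ℕ in atTop, Kconst r s p * (n:ℝ) ^ (-(1/10):ℝ) ≤ ε := by
    filter_upwards [tK.eventually (gt_mem_nhds hε)] with n h
    exact h.le
  -- tail bounds
  have tail_bound : ∀ (N : ℝ), 1 ≤ N → N * p * (1-p) / (N ^ ((7/10):ℝ))^2 ≤ N ^ (-(2/5):ℝ) := by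
    intro N h1
    have hN0 : (0:ℝ) < N := by linarith
    have hsq : (N ^ ((7/10):ℝ))^2 = N ^ ((7/5):ℝ) := by
      rw [sq, ← Real.rpow_add hN0]; norm_num
    have hpow : (0:ℝ) < N ^ ((7/5):ℝ) := Real.rpow_pos_of_pos hN0 _
    have hpq : p * (1-p) ≤ 1 := by nlinarith [sq_nonneg (1-2*p)]
    have h2 : N * p * (1-p) ≤ N := by nlinarith
    rw [hsq]
    calc N * p * (1-p) / N ^ ((7/5):ℝ) ≤ N / N ^ ((7/5):ℝ) := by gcongr
      _ = N ^ (-(2/5):ℝ) := by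
          rw [show N / N ^ ((7/5):ℝ) = N ^ (1:ℝ) / N ^ ((7/5):ℝ) by rw [Real.rpow_one],
            ← Real.rpow_sub hN0]
          norm_num
  have ofReal_tendsto : ∀ (f : ℕ → ℝ), Tendsto f atTop (nhds 0) →
      Tendsto (fun n => ENNReal.ofReal (f n)) atTop (nhds 0) := by
    intro f hf
    have := ENNReal.tendsto_ofReal hf
    simpa using this
  have t25 : Tendsto (fun n : ℕ => ENNReal.ofReal ((n:ℝ) ^ (-(2/5):ℝ))) atTop (nhds 0) :=
    ofReal_tendsto _ ((tendsto_rpow_neg_atTop (by norm_num)).comp tendsto_natCast_atTop_atTop)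
  have t25m : Tendsto (fun n : ℕ => ENNReal.ofReal ((m n:ℝ) ^ (-(2/5):ℝ))) atTop (nhds 0) :=
    ofReal_tendsto _ ((tendsto_rpow_neg_atTop (by norm_num)).comp hmtop)
  have hB1 : Tendsto
      (fun n : ℕ => P {ω | (n:ℝ) ^ ((7/10):ℝ) < |(X n ω : ℝ) - n * p|}) atTop (nhds 0) := by
    apply tendsto_of_tendsto_of_tendsto_of_le_of_le' tendsto_const_nhds t25
      (Eventually.of_forall fun n => zero_le)
    filter_upwards [hNpos] with n h1
    have ht : (0:ℝ) < (n:ℝ) ^ ((7/10):ℝ) := Real.rpow_pos_of_pos (by linarith) _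
    exact le_trans (binom_tail P (X n) n p hp0 hp1 (hXdist n) ht)
      (ENNReal.ofReal_le_ofReal (tail_bound _ h1))
  have hB2 : Tendsto
      (fun n : ℕ => P {ω | (m n:ℝ) ^ ((7/10):ℝ) < |(Y n ω : ℝ) - (m n) * p|}) atTop (nhds 0) := by
    apply tendsto_of_tendsto_of_tendsto_of_le_of_le' tendsto_const_nhds t25m
      (Eventually.of_forall fun n => zero_le)
    filter_upwards [hm1'] with n h1
    have ht : (0:ℝ) < (m n:ℝ) ^ ((7/10):ℝ) := Real.rpow_pos_of_pos (by linarith) _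
    exact le_trans (binom_tail P (Y n) (m n) p hp0 hp1 (hYdist n) ht)
      (ENNReal.ofReal_le_ofReal (tail_bound _ h1))
  have hsum : Tendsto
      (fun n : ℕ => P {ω | (n:ℝ) ^ ((7/10):ℝ) < |(X n ω : ℝ) - n * p|} +
        P {ω | (m n:ℝ) ^ ((7/10):ℝ) < |(Y n ω : ℝ) - (m n) * p|}) atTop (nhds 0) := by
    have := hB1.add hB2
    simpa using this
  apply tendsto_of_tendsto_of_tendsto_of_le_of_le' tendsto_const_nhds hsum
    (Eventually.of_forall fun n => zero_le)
  filter_upwards [hNpos, hmn, hC3, hC3m, hC5] with n h1 h2 h3 h3m h5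
  have hsubset : {ω | ε < |(m n : ℝ) ^ r / (n : ℝ) ^ (s - 1/2) *
      taylorRem r s (n * p) (m n * p) (X n ω : ℝ) (Y n ω : ℝ)|} ⊆
      {ω | (n:ℝ) ^ ((7/10):ℝ) < |(X n ω : ℝ) - n * p|} ∪
      {ω | (m n:ℝ) ^ ((7/10):ℝ) < |(Y n ω : ℝ) - (m n) * p|} := by
    intro ω hω
    by_contra hcon
    rw [Set.mem_union] at hcon
    push_neg at hcon
    obtain ⟨hx, hy⟩ := hcon
    rw [Set.mem_setOf_eq, not_lt] at hx hy
    have hC4 : (n:ℝ) ^ ((7/10):ℝ) + (m n:ℝ) ^ ((7/10):ℝ) ≤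
        ((n:ℝ) * p + (m n:ℝ) * p) / 2 := by linarith
    have hbd := scaled_bound r s p hr hs hp0 h1 h2 h3 hC4 hx hy
    have : ε < ε := lt_of_lt_of_le (lt_of_lt_of_le hω hbd) h5
    exact lt_irrefl _ this
  exact le_trans (measure_mono hsubset) (measure_union_le _ _)
end
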